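/- Let A ∈ ℝ^{n×n} be nonsingular and let p ∈ {0, 1, …, n−1}. The following two conditions are equivalent: (1) for every vector c ∈ ℝ^n \ {0} with s^-(c) ≤ p, one has s^+(Ac) ≤ p; (2) A is strictly sign-regular of order p+1 (SSR_{p+1}), i.e. all (p+1)×(p+1) minors of A are nonzero and have the same sign. -/

import Mathlib

/-- Number of sign changes in a list of reals: the number of adjacent pairs
with strictly negative product. -/
noncomputable def signChanges : List ℝ → ℕ
  | a :: b :: l => (if a * b < 0 then 1 else 0) + signChanges (b :: l)
  | _ => 0

/-- `s⁻` of a list: sign changes after deleting all zero entries. -/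
noncomputable def sMinusList (l : List ℝ) : ℕ :=
  signChanges (l.filter (fun a => decide (a ≠ 0)))

/-- `s⁻(x)`: the number of sign changes in `x` after deleting all zero entries. -/
noncomputable def sMinus {n : ℕ} (x : Fin n → ℝ) : ℕ :=
  sMinusList (List.ofFn x)

/-- Replace each zero entry of `x` by `1` or `-1` according to `ε`. -/
noncomputable def replZeros {n : ℕ} (x : Fin n → ℝ) (ε : Fin n → Bool) : Fin n → ℝ :=
  fun i => if x i = 0 then (if ε i then 1 else -1) else x i

/-- `s⁺(x)`: the maximal number of sign changes over all replacements of the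
zero entries of `x` by `±1`. -/
noncomputable def sPlus {n : ℕ} (x : Fin n → ℝ) : ℕ :=
  Finset.univ.sup fun ε : Fin n → Bool => signChanges (List.ofFn (replZeros x ε))

lemma sign_mul_trans {a b c : ℝ} (h1 : 0 < a * b) (h2 : 0 < b * c) : 0 < a * c := by
  rcases mul_pos_iff.mp h1 with ⟨ha, hb⟩ | ⟨ha, hb⟩ <;>
    rcases mul_pos_iff.mp h2 with ⟨hb', hc⟩ | ⟨hb', hc⟩ <;>
    first
      | exact mul_pos ha hc
      | exact mul_pos_of_neg_of_neg ha hc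
      | linarith

lemma sign_mul_neg_trans {a b c : ℝ} (h1 : a * b < 0) (h2 : 0 < b * c) : a * c < 0 := by
  rcases mul_neg_iff.mp h1 with ⟨ha, hb⟩ | ⟨ha, hb⟩ <;>
    rcases mul_pos_iff.mp h2 with ⟨hb', hc⟩ | ⟨hb', hc⟩ <;>
    first
      | exact mul_neg_of_pos_of_neg ha hc
      | exact mul_neg_of_neg_of_pos ha hc
      | linarith

lemma sign_mul_neg_trans' {a b c : ℝ} (h1 : 0 < a * b) (h2 : b * c < 0) : a * c < 0 := by
  have := sign_mul_neg_trans (a := c) (b := b) (c := a) (by linarith [mul_comm b c])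
    (by linarith [mul_comm a b])
  linarith [mul_comm a c]

lemma sign_mul_neg_neg {a b c : ℝ} (h1 : a * b < 0) (h2 : b * c < 0) : 0 < a * c := by
  rcases mul_neg_iff.mp h1 with ⟨ha, hb⟩ | ⟨ha, hb⟩ <;>
    rcases mul_neg_iff.mp h2 with ⟨hb', hc⟩ | ⟨hb', hc⟩ <;>
    first
      | exact mul_pos ha hc
      | exact mul_pos_of_neg_of_neg ha hc
      | linarith

lemma signChanges_cons_cons (a b : ℝ) (l : List ℝ) :
    signChanges (a :: b :: l) = (if a * b < 0 then 1 else 0) + signChanges (b :: l) := rfl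

lemma signChanges_le_cons (a : ℝ) (l : List ℝ) : signChanges l ≤ signChanges (a :: l) := by
  cases l with
  | nil => simp [signChanges]
  | cons b t => rw [signChanges_cons_cons]; exact Nat.le_add_left _ _

/-- Main upper bound: an alternating sublist of a zero-free list has length
at most `signChanges + 1`; moreover if its head has sign opposite to the head
of the list, at most `signChanges`. -/
lemma alt_sublist_len (L l' : List ℝ) (h : l'.Sublist L) (hz : ∀ x ∈ L, x ≠ 0)
    (hc : l'.Chain' (fun a b => a * b < 0)) :
    l'.length ≤ signChanges L + 1 ∧
      (∀ (x b : ℝ) (t M2 : List ℝ), l' = x :: t → L = b :: M2 → x * b < 0 →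
        l'.length ≤ signChanges L) := by
  induction h with
  | slnil => simp
  | @cons ls lb a h ih =>
    have hzb : ∀ x ∈ lb, x ≠ 0 := fun x hx => hz x (List.mem_cons_of_mem _ hx)
    obtain ⟨ih1, ih2⟩ := ih hzb hc
    refine ⟨ih1.trans (Nat.add_le_add_right (signChanges_le_cons a lb) 1), ?_⟩
    rintro x b t M2 rfl hL hxb
    injection hL with h1 h2
    subst h1; subst h2
    have hxlb : x ∈ lb := h.subset (List.mem_cons_self)
    cases lb with
    | nil => simp at hxlb
    | cons m M' =>
      have hx0 : x ≠ 0 := hzb x hxlb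
      have hm0 : m ≠ 0 := hzb m (List.mem_cons_self)
      rcases lt_trichotomy (x * m) 0 with hlt | heq | hgt
      · exact (ih2 x m t M' rfl rfl hlt).trans (signChanges_le_cons a _)
      · exact absurd heq (mul_ne_zero hx0 hm0)
      · have hbm : a * m < 0 := sign_mul_neg_trans (by linarith [mul_comm x a]) hgt
        rw [signChanges_cons_cons, if_pos hbm]
        omega
  | @cons_cons ls lb a h ih =>
    have hzb : ∀ x ∈ lb, x ≠ 0 := fun x hx => hz x (List.mem_cons_of_mem _ hx)
    have ha0 : a ≠ 0 := hz a (List.mem_cons_self)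
    obtain ⟨ih1, ih2⟩ := ih hzb hc.tail
    constructor
    · cases ls with
      | nil => simp only [List.length_cons, List.length_nil]; omega
      | cons x t =>
        have hax : a * x < 0 := (List.isChain_cons_cons.mp hc).1
        have hxlb : x ∈ lb := h.subset (List.mem_cons_self)
        cases lb with
        | nil => simp at hxlb
        | cons m M' =>
          have hx0 : x ≠ 0 := hzb x hxlb
          have hm0 : m ≠ 0 := hzb m (List.mem_cons_self)
          rcases lt_trichotomy (x * m) 0 with hlt | heq | hgt
          · have h1 := ih2 x m t M' rfl rfl hlt
            have h2 : signChanges (m :: M') ≤ signChanges (a :: m :: M') :=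
              signChanges_le_cons a (m :: M')
            simp only [List.length_cons] at h1 ⊢
            omega
          · exact absurd heq (mul_ne_zero hx0 hm0)
          · have ham : a * m < 0 := sign_mul_neg_trans hax (by linarith [mul_comm x m])
            rw [signChanges_cons_cons, if_pos ham]
            simp only [List.length_cons] at ih1 ⊢
            omega
    · rintro x b t M2 hl hL hxb
      injection hl with e1 e2
      injection hL with e3 e4
      subst e1; subst e3
      exact absurd hxb (mul_self_nonneg a).not_gt

/-- Extraction: a zero-free nonempty list has an alternating sublist of
length `signChanges + 1` whose head has the same sign as the head. -/
lemma exists_alt_sublist : ∀ (L : List ℝ), (∀ x ∈ L, x ≠ 0) → L ≠ [] →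
    ∃ l' : List ℝ, l'.Sublist L ∧ l'.Chain' (fun a b => a * b < 0) ∧
      l'.length = signChanges L + 1 ∧
      ∀ (x b : ℝ) (t M2 : List ℝ), l' = x :: t → L = b :: M2 → 0 < x * b := by
  intro L
  induction L with
  | nil => intro _ h; exact absurd rfl h
  | cons a M ih =>
    intro hz _
    have ha0 : a ≠ 0 := hz a (List.mem_cons_self)
    cases M with
    | nil =>
      refine ⟨[a], List.Sublist.refl _, List.isChain_singleton a, by simp [signChanges], ?_⟩
      rintro x b t M2 hl hL
      injection hl with e1 _; injection hL with e3 _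
      subst e1; subst e3
      exact mul_self_pos.mpr ha0
    | cons m M' =>
      have hzM : ∀ x ∈ m :: M', x ≠ 0 := fun x hx => hz x (List.mem_cons_of_mem _ hx)
      obtain ⟨l'', hsub, hchain, hlen, hhead⟩ := ih hzM (by simp)
      have hm0 : m ≠ 0 := hzM m (List.mem_cons_self)
      cases l'' with
      | nil => simp at hlen
      | cons x'' t'' =>
        have hx''m : 0 < x'' * m := hhead x'' m t'' M' rfl rfl
        rcases lt_trichotomy (a * m) 0 with hlt | heq | hgt
        · -- sign change at the front: prepend a
          refine ⟨a :: x'' :: t'', hsub.cons₂ a, ?_, ?_, ?_⟩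
          · rw [List.Chain', List.isChain_cons_cons]
            exact ⟨sign_mul_neg_trans hlt (by linarith [mul_comm x'' m]), hchain⟩
          · rw [signChanges_cons_cons, if_pos hlt]
            simp only [List.length_cons] at hlen ⊢
            omega
          · rintro x b t M2 hl hL
            injection hl with e1 _; injection hL with e3 _
            subst e1; subst e3
            exact mul_self_pos.mpr ha0
        · exact absurd heq (mul_ne_zero ha0 hm0)
        · -- same sign: replace head by a
          refine ⟨a :: t'', ((List.sublist_cons_self x'' t'').trans hsub).cons₂ a, ?_, ?_, ?_⟩
          · cases t'' with
            | nil => exact List.isChain_singleton a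
            | cons y s =>
              rw [List.Chain', List.isChain_cons_cons]
              have hxy : x'' * y < 0 := (List.isChain_cons_cons.mp hchain).1
              refine ⟨?_, (List.isChain_cons_cons.mp hchain).2⟩
              -- a ~ m ~ x'' so a ~ x'', then a * y < 0
              have hax : 0 < a * x'' := sign_mul_trans hgt (by linarith [mul_comm x'' m])
              exact sign_mul_neg_trans' hax hxy
          · rw [signChanges_cons_cons, if_neg (by linarith)]
            simp only [List.length_cons] at hlen ⊢
            omega
          · rintro x b t M2 hl hL
            injection hl with e1 _; injection hL with e3 _
            subst e1; subst e3
            exact mul_self_pos.mpr ha0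

lemma ofFn_comp_sublist {n m : ℕ} (c : Fin n → ℝ) (t : Fin m → Fin n) (ht : StrictMono t) :
    (List.ofFn (c ∘ t)).Sublist (List.ofFn c) := by
  rw [List.sublist_iff_exists_fin_orderEmbedding_get_eq]
  refine ⟨OrderEmbedding.ofStrictMono
    (fun i => Fin.cast (List.length_ofFn (f := c)).symm (t (Fin.cast (List.length_ofFn (f := c ∘ t)) i))) ?_, ?_⟩
  · intro a b hab
    have h1 : (Fin.cast (List.length_ofFn (f := c ∘ t)) a) < (Fin.cast (List.length_ofFn (f := c ∘ t)) b) := by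
      rw [Fin.lt_def] at hab ⊢
      simpa using hab
    have h2 := ht h1
    rw [Fin.lt_def] at h2 ⊢
    simpa using h2
  · intro ix
    simp only [List.get_ofFn, Function.comp_apply]
    congr 1

lemma chain'_ofFn {n m : ℕ} (c : Fin n → ℝ) (t : Fin (m+1) → Fin n)
    (halt : ∀ k : Fin m, c (t k.castSucc) * c (t k.succ) < 0) :
    (List.ofFn (c ∘ t)).Chain' (fun a b => a * b < 0) := by
  rw [List.Chain', List.isChain_iff_getElem]
  intro i hi
  simp only [List.length_ofFn] at hi
  have hi' : i < m := by omega
  have h := halt ⟨i, hi'⟩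
  simp only [List.getElem_ofFn, Function.comp_apply]
  have e1 : (Fin.cast (List.length_ofFn (f := c ∘ t)) ⟨i, by simp; omega⟩ : Fin (m+1)) =
      (⟨i, hi'⟩ : Fin m).castSucc := by ext; simp
  have e2 : (Fin.cast (List.length_ofFn (f := c ∘ t)) ⟨i+1, by simp; omega⟩ : Fin (m+1)) =
      (⟨i, hi'⟩ : Fin m).succ := by ext; simp
  exact h

lemma sMinus_ge_of_chain {n m : ℕ} (c : Fin n → ℝ) (t : Fin (m+1) → Fin n)
    (ht : StrictMono t) (h0 : ∀ k, c (t k) ≠ 0)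
    (halt : ∀ k : Fin m, c (t k.castSucc) * c (t k.succ) < 0) :
    m ≤ sMinus c := by
  set l' := List.ofFn (c ∘ t) with hl'
  have hsub : l'.Sublist (List.ofFn c) := ofFn_comp_sublist c t ht
  have hself : l'.filter (fun a => decide (a ≠ 0)) = l' := by
    apply List.filter_eq_self.mpr
    intro a ha
    obtain ⟨k, hk⟩ := List.mem_ofFn.mp ha
    simp only [decide_eq_true_eq]
    rw [← hk]
    exact h0 k
  have hsub2 : l'.Sublist ((List.ofFn c).filter (fun a => decide (a ≠ 0))) := by
    have := hsub.filter (fun a => decide (a ≠ 0))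
    rwa [hself] at this
  have hz : ∀ x ∈ (List.ofFn c).filter (fun a => decide (a ≠ 0)), x ≠ 0 := by
    intro x hx
    have := (List.mem_filter.mp hx).2
    simpa using this
  have := (alt_sublist_len _ _ hsub2 hz (chain'_ofFn c t halt)).1
  simp only [hl', List.length_ofFn] at this
  unfold sMinus sMinusList
  omega

lemma SC_ge_of_chain {n m : ℕ} (z : Fin n → ℝ) (hz : ∀ i, z i ≠ 0)
    (t : Fin (m+1) → Fin n) (ht : StrictMono t)
    (halt : ∀ k : Fin m, z (t k.castSucc) * z (t k.succ) < 0) :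
    m ≤ signChanges (List.ofFn z) := by
  have hsub : (List.ofFn (z ∘ t)).Sublist (List.ofFn z) := ofFn_comp_sublist z t ht
  have hz' : ∀ x ∈ List.ofFn z, x ≠ 0 := by
    intro x hx
    obtain ⟨k, hk⟩ := List.mem_ofFn.mp hx
    rw [← hk]; exact hz k
  have := (alt_sublist_len _ _ hsub hz' (chain'_ofFn z t halt)).1
  simp only [List.length_ofFn] at this
  omega

lemma exists_chain_of_sMinus_ge {n m : ℕ} (c : Fin n → ℝ) (hc : ∃ i, c i ≠ 0)
    (hm : m ≤ sMinus c) :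
    ∃ t : Fin (m+1) → Fin n, StrictMono t ∧ (∀ k, c (t k) ≠ 0) ∧
      ∀ k : Fin m, c (t k.castSucc) * c (t k.succ) < 0 := by
  classical
  set F := (List.ofFn c).filter (fun a => decide (a ≠ 0)) with hF
  have hzF : ∀ x ∈ F, x ≠ 0 := by
    intro x hx
    have := (List.mem_filter.mp hx).2
    simpa using this
  have hFne : F ≠ [] := by
    obtain ⟨i, hi⟩ := hc
    have : c i ∈ F := List.mem_filter.mpr ⟨List.mem_ofFn.mpr ⟨i, rfl⟩, by simpa using hi⟩
    exact List.ne_nil_of_mem this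
  obtain ⟨l', hsub, hchain, hlen, _⟩ := exists_alt_sublist F hzF hFne
  have hSCF : signChanges F = sMinus c := rfl
  set l'' := l'.take (m+1) with hl''
  have hsub2 : l''.Sublist (List.ofFn c) :=
    ((List.take_sublist _ _).trans hsub).trans List.filter_sublist
  have hchain'' : l''.Chain' (fun a b => a * b < 0) := hchain.take _
  have hlen'' : l''.length = m + 1 := by
    rw [hl'', List.length_take, hlen, hSCF]
    omega
  obtain ⟨f, hf⟩ := List.sublist_iff_exists_fin_orderEmbedding_get_eq.mp hsub2
  set t : Fin (m+1) → Fin n := fun k =>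
    Fin.cast (List.length_ofFn (f := c)) (f (Fin.cast hlen''.symm k)) with hts
  have hget : ∀ k : Fin (m+1), c (t k) = l''.get (Fin.cast hlen''.symm k) := by
    intro k
    have := hf (Fin.cast hlen''.symm k)
    rw [this, List.get_ofFn]
  refine ⟨t, ?_, ?_, ?_⟩
  · intro a b hab
    have h1 : (Fin.cast hlen''.symm a) < (Fin.cast hlen''.symm b) := by
      rw [Fin.lt_def] at hab ⊢; simpa using hab
    have h2 := f.strictMono h1
    simp only [hts, Fin.lt_def, Fin.coe_cast] at h2 ⊢
    exact h2
  · intro k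
    rw [hget k]
    have : l''.get (Fin.cast hlen''.symm k) ∈ l'' := by apply List.get_mem
    exact hzF _ (((List.take_sublist _ _).trans hsub).subset this)
  · intro k
    have hcg := List.isChain_iff_getElem.mp hchain''
    have hk : (k : ℕ) + 1 < l''.length := by rw [hlen'']; omega
    have := hcg k hk
    rw [hget k.castSucc, hget k.succ]
    convert this using 3 <;> rfl

lemma replZeros_ne_zero {n : ℕ} (y : Fin n → ℝ) (ε : Fin n → Bool) (i : Fin n) :
    replZeros y ε i ≠ 0 := by
  unfold replZeros
  by_cases h : y i = 0
  · rw [if_pos h]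
    by_cases hε : ε i <;> simp [hε]
  · rwa [if_neg h]

/-- From adjacent alternation to global signs. -/
lemma alt_sign {n m : ℕ} (z : Fin n → ℝ) (t : Fin (m+1) → Fin n)
    (h0 : ∀ k, z (t k) ≠ 0)
    (halt : ∀ k : Fin m, z (t k.castSucc) * z (t k.succ) < 0) :
    ∀ k : Fin (m+1), 0 < (if 0 < z (t 0) then (1:ℝ) else -1) * (-1)^(k:ℕ) * z (t k) := by
  set σ : ℝ := if 0 < z (t 0) then (1:ℝ) else -1 with hσ
  intro k
  induction k using Fin.induction with
  | zero =>
    simp only [Fin.val_zero, pow_zero, mul_one]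
    rcases (h0 0).lt_or_gt with h | h
    · rw [hσ, if_neg (by linarith)]; nlinarith
    · rw [hσ, if_pos h]; nlinarith
  | succ i ih =>
    have hi := halt i
    have hcs : ((i.castSucc : Fin (m+1)) : ℕ) = (i : ℕ) := rfl
    have hsc : ((i.succ : Fin (m+1)) : ℕ) = (i : ℕ) + 1 := rfl
    rw [hcs] at ih
    rw [hsc, pow_succ]
    nlinarith [ih, hi, sq_nonneg (z (t i.castSucc)), sq_nonneg σ]

/-- Weak alternation along a strictly increasing index pattern gives a lower
bound for `sPlus`. -/
lemma sPlus_ge {n m : ℕ} (y : Fin n → ℝ) (σ : ℝ) (hσ : σ = 1 ∨ σ = -1)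
    (t : Fin (m+1) → Fin n) (ht : StrictMono t)
    (h : ∀ k : Fin (m+1), 0 ≤ σ * (-1)^(k:ℕ) * y (t k)) : m ≤ sPlus y := by
  classical
  set ε : Fin n → Bool := fun i =>
    if h' : ∃ k : Fin (m+1), t k = i then
      decide (0 < σ * (-1)^((h'.choose : Fin (m+1)):ℕ)) else true with hε
  set z := replZeros y ε with hz
  have hσ0 : σ ≠ 0 := by rcases hσ with rfl | rfl <;> norm_num
  have hzk : ∀ k : Fin (m+1), 0 < σ * (-1)^(k:ℕ) * z (t k) := by
    intro k
    by_cases hy : y (t k) = 0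
    · have hex : ∃ k' : Fin (m+1), t k' = t k := ⟨k, rfl⟩
      have hch : hex.choose = k := ht.injective hex.choose_spec
      have hzv : z (t k) = if 0 < σ * (-1)^((k:ℕ)) then (1:ℝ) else -1 := by
        rw [hz]
        unfold replZeros
        rw [if_pos hy, hε]
        simp only [dif_pos hex, hch]
        by_cases hc : 0 < σ * (-1)^((k:ℕ)) <;> simp [hc]
      rw [hzv]
      by_cases hc : 0 < σ * (-1)^((k:ℕ))
      · rw [if_pos hc]; simpa using hc
      · rw [if_neg hc]
        have h1 : σ * (-1)^((k:ℕ)) ≠ 0 := by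
          apply mul_ne_zero hσ0
          positivity
        have h2 : σ * (-1)^((k:ℕ)) < 0 := lt_of_le_of_ne (not_lt.mp hc) h1
        nlinarith
    · have hzv : z (t k) = y (t k) := by rw [hz]; unfold replZeros; rw [if_neg hy]
      rw [hzv]
      have := h k
      have hne : σ * (-1)^((k:ℕ)) * y (t k) ≠ 0 := by
        apply mul_ne_zero (mul_ne_zero hσ0 (by positivity)) hy
      exact lt_of_le_of_ne this (Ne.symm hne)
  have halt : ∀ k : Fin m, z (t k.castSucc) * z (t k.succ) < 0 := by
    intro k
    have h1 := hzk k.castSucc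
    have h2 := hzk k.succ
    have hcs : ((k.castSucc : Fin (m+1)) : ℕ) = (k : ℕ) := rfl
    have hsc : ((k.succ : Fin (m+1)) : ℕ) = (k : ℕ) + 1 := rfl
    rw [hcs] at h1
    rw [hsc, pow_succ] at h2
    have hσsq : σ * σ = 1 := by rcases hσ with rfl | rfl <;> norm_num
    have hp : (-1:ℝ)^((k:ℕ)) * (-1)^((k:ℕ)) = 1 := by
      rw [← pow_add]; exact Even.neg_one_pow ⟨(k:ℕ), rfl⟩
    have hmm := mul_pos h1 h2
    have hexp : (σ * (-1)^((k:ℕ)) * z (t k.castSucc)) * (σ * ((-1)^((k:ℕ)) * -1) * z (t k.succ))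
        = -((σ*σ) * ((-1)^((k:ℕ)) * (-1)^((k:ℕ))) * (z (t k.castSucc) * z (t k.succ))) := by ring
    rw [hexp, hσsq, hp, one_mul, one_mul] at hmm
    linarith
  have hSC := SC_ge_of_chain z (replZeros_ne_zero y ε) t ht halt
  calc m ≤ signChanges (List.ofFn (replZeros y ε)) := hSC
    _ ≤ sPlus y := by
      unfold sPlus
      exact Finset.le_sup (f := fun δ => signChanges (List.ofFn (replZeros y δ))) (Finset.mem_univ ε)

/-- Converse: a large `sPlus` yields a weakly alternating subsequence. -/
lemma sPlus_char {n m : ℕ} (y : Fin n → ℝ) (hm : m + 1 ≤ sPlus y) :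
    ∃ σ : ℝ, (σ = 1 ∨ σ = -1) ∧ ∃ t : Fin (m+2) → Fin n, StrictMono t ∧
      ∀ k : Fin (m+2), 0 ≤ σ * (-1)^(k:ℕ) * y (t k) := by
  classical
  have hbot : (⊥:ℕ) < m + 1 := by
    have : (⊥:ℕ) = 0 := rfl
    omega
  obtain ⟨ε, -, hε⟩ := (Finset.le_sup_iff hbot).mp (by unfold sPlus at hm; exact hm)
  set z := replZeros y ε with hz
  have hn : 0 < n := by
    rcases Nat.eq_zero_or_pos n with rfl | h
    · exfalso
      have hnil : List.ofFn (replZeros y ε) = [] := by simp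
      rw [hnil] at hε
      simp [signChanges] at hε
    · exact h
  -- extract a strict chain for z of length m+2
  have hch : ∃ t : Fin (m+2) → Fin n, StrictMono t ∧ (∀ k, z (t k) ≠ 0) ∧
      ∀ k : Fin (m+1), z (t k.castSucc) * z (t k.succ) < 0 := by
    -- mimic exists_chain_of_sMinus_ge but with no filtering
    have hzF : ∀ x ∈ List.ofFn z, x ≠ 0 := by
      intro x hx
      obtain ⟨k, hk⟩ := List.mem_ofFn.mp hx
      rw [← hk]; exact replZeros_ne_zero y ε k
    have hFne : List.ofFn z ≠ [] := by
      have : z ⟨0, hn⟩ ∈ List.ofFn z := List.mem_ofFn.mpr ⟨⟨0, hn⟩, rfl⟩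
      exact List.ne_nil_of_mem this
    obtain ⟨l', hsub, hchain, hlen, _⟩ := exists_alt_sublist (List.ofFn z) hzF hFne
    set l'' := l'.take (m+2) with hl''
    have hsub2 : l''.Sublist (List.ofFn z) := (List.take_sublist _ _).trans hsub
    have hchain'' : l''.Chain' (fun a b => a * b < 0) := hchain.take _
    have hlen'' : l''.length = m + 2 := by
      rw [hl'', List.length_take, hlen]
      omega
    obtain ⟨f, hf⟩ := List.sublist_iff_exists_fin_orderEmbedding_get_eq.mp hsub2
    set t : Fin (m+2) → Fin n := fun k =>
      Fin.cast (List.length_ofFn (f := z)) (f (Fin.cast hlen''.symm k)) with hts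
    have hget : ∀ k : Fin (m+2), z (t k) = l''.get (Fin.cast hlen''.symm k) := by
      intro k
      have := hf (Fin.cast hlen''.symm k)
      rw [this, List.get_ofFn]
    refine ⟨t, ?_, ?_, ?_⟩
    · intro a b hab
      have h1 : (Fin.cast hlen''.symm a) < (Fin.cast hlen''.symm b) := by
        rw [Fin.lt_def] at hab ⊢; simpa using hab
      have h2 := f.strictMono h1
      simp only [hts, Fin.lt_def, Fin.coe_cast] at h2 ⊢
      exact h2
    · intro k
      rw [hget k]
      have : l''.get (Fin.cast hlen''.symm k) ∈ l'' := by apply List.get_mem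
      exact hzF _ (hsub2.subset this)
    · intro k
      have hcg := List.isChain_iff_getElem.mp hchain''
      have hk : (k : ℕ) + 1 < l''.length := by rw [hlen'']; omega
      have := hcg k hk
      rw [hget k.castSucc, hget k.succ]
      convert this using 3 <;> rfl
  obtain ⟨t, ht, h0, halt⟩ := hch
  set σ : ℝ := if 0 < z (t 0) then (1:ℝ) else -1 with hσ
  have hσpm : σ = 1 ∨ σ = -1 := by
    rw [hσ]; by_cases hc : 0 < z (t 0) <;> simp [hc]
  refine ⟨σ, hσpm, t, ht, ?_⟩
  intro k
  have hstrict := alt_sign z t h0 halt k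
  rw [← hσ] at hstrict
  by_cases hy : y (t k) = 0
  · rw [hy]; simp
  · have : z (t k) = y (t k) := by rw [hz]; unfold replZeros; rw [if_neg hy]
    rw [this] at hstrict
    linarith

lemma sPlus_ge_of_zeros {n p : ℕ} (y : Fin n → ℝ) (S : Finset (Fin n))
    (hS : S.card = p+1) (hy : ∀ i ∈ S, y i = 0) (hn : p+2 ≤ n) : p+1 ≤ sPlus y := by
  obtain ⟨T, hST, hT⟩ := Finset.exists_superset_card_eq (s := S) (n := p+2)
    (by omega) (by simpa using hn)
  set γ : Fin (p+2) → Fin n := fun k => (T.orderIsoOfFin hT k : Fin n) with hγ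
  have hγmono : StrictMono γ := fun a b hab =>
    Subtype.coe_lt_coe.mpr ((T.orderIsoOfFin hT).strictMono hab)
  by_cases hall : ∀ l : Fin (p+2), 0 ≤ (1:ℝ) * (-1)^(l:ℕ) * y (γ l)
  · exact sPlus_ge y 1 (Or.inl rfl) γ hγmono hall
  · push_neg at hall
    obtain ⟨l₀, hl₀⟩ := hall
    apply sPlus_ge y (-1) (Or.inr rfl) γ hγmono
    intro l
    by_cases hyl : y (γ l) = 0
    · rw [hyl]; simp
    · have hlnotS : γ l ∉ S := fun h => hyl (hy _ h)
      have hyl₀ : y (γ l₀) ≠ 0 := by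
        intro h0
        rw [h0] at hl₀
        simp at hl₀
      have hl0notS : γ l₀ ∉ S := fun h => hyl₀ (hy _ h)
      have hd : (T \ S).card = 1 := by
        rw [Finset.card_sdiff_of_subset hST]
        omega
      obtain ⟨e, he⟩ := Finset.card_eq_one.mp hd
      have hmemT : ∀ k : Fin (p+2), γ k ∈ T := fun k => (T.orderIsoOfFin hT k).2
      have h1 : γ l = e := by
        have : γ l ∈ T \ S := Finset.mem_sdiff.mpr ⟨hmemT l, hlnotS⟩
        rw [he] at this
        simpa using this
      have h2 : γ l₀ = e := by
        have : γ l₀ ∈ T \ S := Finset.mem_sdiff.mpr ⟨hmemT l₀, hl0notS⟩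
        rw [he] at this
        simpa using this
      have hll : l = l₀ := hγmono.injective (h1.trans h2.symm)
      subst hll
      nlinarith [hl₀]

lemma sMinus_le_of_supp {n m : ℕ} (c : Fin n → ℝ) (S : Finset (Fin n)) (hcard : S.card ≤ m+1)
    (hsupp : ∀ i, c i ≠ 0 → i ∈ S) : sMinus c ≤ m := by
  by_contra hlt
  push_neg at hlt
  have hne : ∃ i, c i ≠ 0 := by
    by_contra hno
    push_neg at hno
    have hfil : (List.ofFn c).filter (fun a => decide (a ≠ 0)) = [] := by
      apply List.filter_eq_nil_iff.mpr
      intro a ha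
      obtain ⟨i, hi⟩ := List.mem_ofFn.mp ha
      simp [← hi, hno i]
    have : sMinus c = 0 := by
      unfold sMinus sMinusList
      rw [hfil]
      rfl
    omega
  obtain ⟨t, ht, h0, -⟩ := exists_chain_of_sMinus_ge c hne (by omega : m + 1 ≤ sMinus c)
  have hcard2 : (Finset.univ.image t).card = m+2 := by
    rw [Finset.card_image_of_injective _ ht.injective, Finset.card_univ, Fintype.card_fin]
  have hsub : Finset.univ.image t ⊆ S := by
    intro x hx
    obtain ⟨k, -, rfl⟩ := Finset.mem_image.mp hx
    exact hsupp _ (h0 k)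
  have := Finset.card_le_card hsub
  omega

noncomputable def extVec {n m : ℕ} (β : Fin m → Fin n) (ξ : Fin m → ℝ) : Fin n → ℝ :=
  fun i => ∑ j, if β j = i then ξ j else 0

lemma extVec_apply {n m : ℕ} (β : Fin m → Fin n) (hβ : Function.Injective β)
    (ξ : Fin m → ℝ) (j : Fin m) : extVec β ξ (β j) = ξ j := by
  unfold extVec
  rw [Finset.sum_eq_single j]
  · simp
  · intro j' _ hne
    exact if_neg (fun h => hne (hβ h))
  · intro h
    exact absurd (Finset.mem_univ j) h

lemma extVec_supp {n m : ℕ} (β : Fin m → Fin n) (ξ : Fin m → ℝ) (i : Fin n)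
    (h : extVec β ξ i ≠ 0) : i ∈ Finset.univ.image β := by
  by_contra hni
  apply h
  unfold extVec
  apply Finset.sum_eq_zero
  intro j _
  apply if_neg
  intro hji
  exact hni (Finset.mem_image.mpr ⟨j, Finset.mem_univ j, hji⟩)

lemma mulVec_extVec {n m : ℕ} (A : Matrix (Fin n) (Fin n) ℝ) (β : Fin m → Fin n)
    (ξ : Fin m → ℝ) (r : Fin n) :
    A.mulVec (extVec β ξ) r = ∑ j, A r (β j) * ξ j := by
  unfold Matrix.mulVec extVec dotProduct
  have h1 : ∀ i, A r i * (∑ j, if β j = i then ξ j else 0)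
      = ∑ j, if β j = i then A r i * ξ j else 0 := by
    intro i
    rw [Finset.mul_sum]
    congr 1
    ext j
    split <;> simp
  simp_rw [h1]
  rw [Finset.sum_comm]
  congr 1
  ext j
  have : ∀ i : Fin n, (if β j = i then A r i * ξ j else 0)
      = if β j = i then A r (β j) * ξ j else 0 := by
    intro i
    split_ifs with h
    · rw [h]
    · rfl
  simp_rw [this]
  rw [Finset.sum_ite_eq]
  simp

lemma sum_cofactor_eq_zero {m : ℕ} (M : Matrix (Fin (m+1)) (Fin (m+2)) ℝ) (r : Fin (m+1)) :
    ∑ j : Fin (m+2), (-1:ℝ)^(j:ℕ) * M r j * (M.submatrix id j.succAbove).det = 0 := by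
  set D : Matrix (Fin (m+2)) (Fin (m+2)) ℝ := Matrix.of (Fin.cases (M r) M) with hD
  have hdup : D.det = 0 := by
    apply Matrix.det_zero_of_row_eq (i := 0) (j := r.succ) (Fin.succ_ne_zero r).symm
    ext b
    simp [hD]; rfl
  have hexp := Matrix.det_succ_row_zero D
  rw [hdup] at hexp
  have hsub : ∀ j : Fin (m+2), D.submatrix Fin.succ j.succAbove = M.submatrix id j.succAbove := by
    intro j
    ext a b
    simp [hD, Matrix.submatrix]; rfl
  have hD0 : ∀ j, D 0 j = M r j := by intro j; simp [hD]; rfl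
  calc ∑ j : Fin (m+2), (-1:ℝ)^(j:ℕ) * M r j * (M.submatrix id j.succAbove).det
      = ∑ j : Fin (m+2), (-1:ℝ)^(j:ℕ) * D 0 j * (D.submatrix Fin.succ j.succAbove).det := by
        apply Finset.sum_congr rfl
        intro j _
        rw [hsub j, hD0 j]
    _ = 0 := hexp.symm

/-- Key lemma: if all maximal minors of the `n×(p+1)` matrix `B` are nonzero
of the same sign, then `s⁺(Bξ) ≤ p` for every `ξ ≠ 0`. -/
lemma key_lemma {n p : ℕ} (B : Matrix (Fin n) (Fin (p+1)) ℝ)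
    (hB : (∀ ρ : Fin (p+1) → Fin n, StrictMono ρ → 0 < (B.submatrix ρ id).det) ∨
          (∀ ρ : Fin (p+1) → Fin n, StrictMono ρ → (B.submatrix ρ id).det < 0))
    (ξ : Fin (p+1) → ℝ) (hξ : ξ ≠ 0) : sPlus (B.mulVec ξ) ≤ p := by
  by_contra hgt
  push_neg at hgt
  set y := B.mulVec ξ with hy
  obtain ⟨σ, hσ, t, ht, hweak⟩ := sPlus_char y (by omega : p + 1 ≤ sPlus y)
  -- the bordered (p+2)×(p+2) matrix
  set C : Matrix (Fin (p+2)) (Fin (p+2)) ℝ :=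
    Matrix.of (fun k => Fin.cons (y (t k)) (fun l' => B (t k) l')) with hC
  have hCdet : C.det = 0 := by
    rw [← Matrix.exists_mulVec_eq_zero_iff]
    refine ⟨Fin.cons (-1:ℝ) ξ, ?_, ?_⟩
    · intro h
      have := congrFun h 0
      simp at this
    · funext k
      have hdef : C.mulVec (Fin.cons (-1:ℝ) ξ) k = ∑ l, C k l * (Fin.cons (-1:ℝ) ξ : Fin (p+2) → ℝ) l := rfl
      have hzero : (0 : Fin (p+2) → ℝ) k = 0 := rfl
      rw [hdef, hzero, Fin.sum_univ_succ]
      simp only [hC, Matrix.of_apply, Fin.cons_zero, Fin.cons_succ]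
      have hyk : ∑ l' : Fin (p+1), B (t k) l' * ξ l' = y (t k) := rfl
      rw [hyk]
      ring
  have hexp := Matrix.det_succ_column_zero C
  rw [hCdet] at hexp
  have hsubm : ∀ i : Fin (p+2),
      C.submatrix i.succAbove Fin.succ = B.submatrix (t ∘ i.succAbove) id := by
    intro i
    ext a b
    simp [hC, Matrix.submatrix]
  have hC0 : ∀ i : Fin (p+2), C i 0 = y (t i) := by intro i; simp [hC]
  have hMi : ∀ i : Fin (p+2), StrictMono (t ∘ i.succAbove) :=
    fun i => ht.comp (Fin.strictMono_succAbove i)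
  set M : Fin (p+2) → ℝ := fun i => (B.submatrix (t ∘ i.succAbove) id).det with hM
  have hkey : ∑ i : Fin (p+2), (-1:ℝ)^(i:ℕ) * y (t i) * M i = 0 := by
    rw [eq_comm]
    calc (0:ℝ) = ∑ i : Fin (p+2), (-1:ℝ)^(i:ℕ) * C i 0 * (C.submatrix i.succAbove Fin.succ).det :=
          hexp
      _ = ∑ i : Fin (p+2), (-1:ℝ)^(i:ℕ) * y (t i) * M i := by
          apply Finset.sum_congr rfl
          intro i _
          rw [hC0 i, hsubm i]
  have hσ0 : σ ≠ 0 := by rcases hσ with rfl | rfl <;> norm_num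
  have hσsq : σ * σ = 1 := by rcases hσ with rfl | rfl <;> norm_num
  -- rewrite terms: (-1)^i y(t i) = σ * u i with u i ≥ 0
  set u : Fin (p+2) → ℝ := fun i => σ * (-1)^(i:ℕ) * y (t i) with hu
  have hterm : ∀ i : Fin (p+2), (-1:ℝ)^(i:ℕ) * y (t i) * M i = σ * (u i * M i) := by
    intro i
    have hh : σ * (u i * M i) = (σ * σ) * ((-1:ℝ)^(i:ℕ) * y (t i) * M i) := by
      simp only [hu]
      ring
    rw [hh, hσsq, one_mul]
  have hsum0 : ∑ i : Fin (p+2), u i * M i = 0 := by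
    have : σ * ∑ i : Fin (p+2), u i * M i = 0 := by
      rw [Finset.mul_sum, ← hkey]
      apply Finset.sum_congr rfl
      intro i _
      exact (hterm i).symm
    rcases mul_eq_zero.mp this with h | h
    · exact absurd h hσ0
    · exact h
  have hyt0 : ∀ i : Fin (p+2), y (t i) = 0 := by
    intro i
    rcases hB with hpos | hneg
    · have hnn : ∀ i ∈ Finset.univ, 0 ≤ u i * M i :=
        fun i _ => mul_nonneg (hweak i) (hpos _ (hMi i)).le
      have := (Finset.sum_eq_zero_iff_of_nonneg hnn).mp hsum0 i (Finset.mem_univ i)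
      have hMne : M i ≠ 0 := (hpos _ (hMi i)).ne'
      have hui : u i = 0 := by
        rcases mul_eq_zero.mp this with h | h
        · exact h
        · exact absurd h hMne
      have : σ * (-1)^(i:ℕ) ≠ 0 := mul_ne_zero hσ0 (by positivity)
      rw [hu] at hui
      rcases mul_eq_zero.mp hui with h | h
      · exact absurd h this
      · exact h
    · have hnp : ∀ i ∈ Finset.univ, u i * M i ≤ 0 :=
        fun i _ => mul_nonpos_of_nonneg_of_nonpos (hweak i) (hneg _ (hMi i)).le
      have := (Finset.sum_eq_zero_iff_of_nonpos hnp).mp hsum0 i (Finset.mem_univ i)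
      have hMne : M i ≠ 0 := (hneg _ (hMi i)).ne
      have hui : u i = 0 := by
        rcases mul_eq_zero.mp this with h | h
        · exact h
        · exact absurd h hMne
      have : σ * (-1)^(i:ℕ) ≠ 0 := mul_ne_zero hσ0 (by positivity)
      rw [hu] at hui
      rcases mul_eq_zero.mp hui with h | h
      · exact absurd h this
      · exact h
  -- now the invertible square submatrix kills ξ
  set ρ : Fin (p+1) → Fin n := t ∘ (0 : Fin (p+2)).succAbove with hρ
  have hdet : (B.submatrix ρ id).det ≠ 0 := by
    rcases hB with hpos | hneg
    · exact (hpos _ (hMi 0)).ne'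
    · exact (hneg _ (hMi 0)).ne
  have hmv : (B.submatrix ρ id).mulVec ξ = 0 := by
    ext a
    show ∑ j, B (ρ a) j * ξ j = 0
    have h1 : ∑ j, B (ρ a) j * ξ j = y (ρ a) := rfl
    rw [h1, hρ]
    exact hyt0 _
  have : (B.submatrix ρ id).det = 0 := by
    rw [← Matrix.exists_mulVec_eq_zero_iff]
    exact ⟨ξ, hξ, hmv⟩
  exact hdet this

/-- Valid block structure for a vector. -/
def ValidBI {n p : ℕ} (c : Fin n → ℝ) (φ : Fin n → Fin (p+1)) (ι : Fin (p+1) → Fin n) : Prop :=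
  Monotone φ ∧ (∀ j, c (ι j) ≠ 0) ∧ (∀ j, φ (ι j) = j) ∧
    ∀ i, c i ≠ 0 → 0 < c i * c (ι (φ i))

lemma strictMono_finCases {n m : ℕ} (i₀ : Fin n) (t : Fin (m+1) → Fin n)
    (ht : StrictMono t) (h0 : i₀ < t 0) :
    StrictMono (Fin.cases i₀ t : Fin (m+2) → Fin n) := by
  intro a b hab
  induction a using Fin.cases with
  | zero =>
    induction b using Fin.cases with
    | zero => exact absurd hab (lt_irrefl _)
    | succ b' =>
      simp only [Fin.cases_zero, Fin.cases_succ]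
      exact h0.trans_le (ht.monotone (Fin.zero_le b'))
  | succ a' =>
    induction b using Fin.cases with
    | zero => exact absurd hab (Fin.succ_pos a').asymm
    | succ b' =>
      simp only [Fin.cases_succ]
      exact ht (Fin.succ_lt_succ_iff.mp hab)

lemma chain_finCases {n m : ℕ} (c : Fin n → ℝ) (i₀ : Fin n) (t : Fin (m+1) → Fin n)
    (halt : ∀ k : Fin m, c (t k.castSucc) * c (t k.succ) < 0)
    (hfirst : c i₀ * c (t 0) < 0) :
    ∀ k : Fin (m+1), c ((Fin.cases i₀ t : Fin (m+2) → Fin n) k.castSucc) *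
      c ((Fin.cases i₀ t : Fin (m+2) → Fin n) k.succ) < 0 := by
  intro k
  induction k using Fin.cases with
  | zero =>
    have e1 : ((0 : Fin (m+1)).castSucc) = (0 : Fin (m+2)) := rfl
    have e2 : ((0 : Fin (m+1)).succ) = Fin.succ (0 : Fin (m+1)) := rfl
    rw [e1]
    simp only [Fin.cases_zero, Fin.cases_succ]
    exact hfirst
  | succ k' =>
    have e1 : (k'.succ).castSucc = (k'.castSucc).succ := (Fin.succ_castSucc k').symm
    rw [e1]
    simp only [Fin.cases_succ]
    exact halt k'

/-- If `sMinus c ≤ p` then there is no strict alternating chain of length `p+2`. -/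
lemma no_long_chain {n p : ℕ} (c : Fin n → ℝ) (hsm : sMinus c ≤ p)
    (t : Fin (p+2) → Fin n) (ht : StrictMono t) (h0 : ∀ k, c (t k) ≠ 0)
    (halt : ∀ k : Fin (p+1), c (t k.castSucc) * c (t k.succ) < 0) : False := by
  have := sMinus_ge_of_chain c t ht h0 halt
  omega

lemma card_filter_succ {n : ℕ} (c : Fin (n+1) → ℝ) :
    (Finset.univ.filter (fun i => c i ≠ 0)).card =
      (if c 0 ≠ 0 then 1 else 0) +
        (Finset.univ.filter (fun i : Fin n => c i.succ ≠ 0)).card := by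
  classical
  rw [Finset.card_filter, Finset.card_filter, Fin.sum_univ_succ]

lemma glue0 {n p : ℕ} (c : Fin (n+1) → ℝ) (hc0 : c 0 = 0)
    {φ' : Fin n → Fin (p+1)} {ι' : Fin (p+1) → Fin n}
    (h : ValidBI (fun i => c i.succ) φ' ι') :
    ValidBI c (Fin.cases 0 φ') (Fin.succ ∘ ι') := by
  obtain ⟨hmono, hrep, hφι, hsign⟩ := h
  refine ⟨?_, ?_, ?_, ?_⟩
  · intro a b hab
    induction a using Fin.cases with
    | zero => simp only [Fin.cases_zero]; exact Fin.zero_le _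
    | succ a' =>
      induction b using Fin.cases with
      | zero => exact absurd (Fin.le_zero_iff.mp hab) (Fin.succ_ne_zero a')
      | succ b' =>
        simp only [Fin.cases_succ]
        exact hmono (Fin.succ_le_succ_iff.mp hab)
  · intro j
    exact hrep j
  · intro j
    simp only [Function.comp_apply, Fin.cases_succ]
    exact hφι j
  · intro i hi
    induction i using Fin.cases with
    | zero => exact absurd hc0 hi
    | succ i' =>
      simp only [Fin.cases_succ, Function.comp_apply]
      exact hsign i' hi

lemma glueShift {n p : ℕ} (c : Fin (n+1) → ℝ) (hc0 : c 0 ≠ 0)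
    {φ' : Fin n → Fin (p+1)} {ι' : Fin (p+1) → Fin n}
    (h : ValidBI (fun i => c i.succ) φ' ι') :
    ValidBI (p := p+1) c (Fin.cases 0 (fun i => (φ' i).succ))
      (Fin.cases 0 (fun j => (ι' j).succ)) := by
  obtain ⟨hmono, hrep, hφι, hsign⟩ := h
  refine ⟨?_, ?_, ?_, ?_⟩
  · intro a b hab
    induction a using Fin.cases with
    | zero => simp only [Fin.cases_zero]; exact Fin.zero_le _
    | succ a' =>
      induction b using Fin.cases with
      | zero => exact absurd (Fin.le_zero_iff.mp hab) (Fin.succ_ne_zero a')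
      | succ b' =>
        simp only [Fin.cases_succ]
        exact Fin.succ_le_succ_iff.mpr (hmono (Fin.succ_le_succ_iff.mp hab))
  · intro j
    induction j using Fin.cases with
    | zero => simpa using hc0
    | succ j' => simpa using hrep j'
  · intro j
    induction j using Fin.cases with
    | zero => simp
    | succ j' =>
      simp only [Fin.cases_succ]
      rw [hφι j']
  · intro i hi
    induction i using Fin.cases with
    | zero =>
      simp only [Fin.cases_zero]
      exact mul_self_pos.mpr hc0
    | succ i' =>
      simp only [Fin.cases_succ]
      exact hsign i' hi

lemma glueSame {n p : ℕ} (c : Fin (n+1) → ℝ) (hc0 : c 0 ≠ 0)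
    {φ' : Fin n → Fin (p+1)} {ι' : Fin (p+1) → Fin n}
    (h : ValidBI (fun i => c i.succ) φ' ι')
    (hsgn : 0 < c 0 * c (ι' 0).succ) :
    ValidBI c (Fin.cases 0 φ') (Fin.succ ∘ ι') := by
  obtain ⟨hmono, hrep, hφι, hsign⟩ := h
  refine ⟨?_, ?_, ?_, ?_⟩
  · intro a b hab
    induction a using Fin.cases with
    | zero => simp only [Fin.cases_zero]; exact Fin.zero_le _
    | succ a' =>
      induction b using Fin.cases with
      | zero => exact absurd (Fin.le_zero_iff.mp hab) (Fin.succ_ne_zero a')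
      | succ b' =>
        simp only [Fin.cases_succ]
        exact hmono (Fin.succ_le_succ_iff.mp hab)
  · intro j
    exact hrep j
  · intro j
    simp only [Function.comp_apply, Fin.cases_succ]
    exact hφι j
  · intro i hi
    induction i using Fin.cases with
    | zero =>
      simp only [Fin.cases_zero, Function.comp_apply]
      exact hsgn
    | succ i' =>
      simp only [Fin.cases_succ, Function.comp_apply]
      exact hsign i' hi

lemma sMinus_tail_le {n p : ℕ} (c : Fin (n+1) → ℝ) (hc' : ∃ i : Fin n, c i.succ ≠ 0)
    (h : sMinus c ≤ p) : sMinus (fun i : Fin n => c i.succ) ≤ p := by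
  by_contra hgt
  push_neg at hgt
  obtain ⟨t', ht', h0', halt'⟩ := exists_chain_of_sMinus_ge (fun i : Fin n => c i.succ) hc'
    (by omega : p + 1 ≤ sMinus (fun i : Fin n => c i.succ))
  have ht2 : StrictMono (fun k => (t' k).succ) :=
    fun a b hab => Fin.succ_lt_succ_iff.mpr (ht' hab)
  exact no_long_chain c h _ ht2 h0' halt'

lemma blocksExact : ∀ (n p : ℕ) (c : Fin n → ℝ),
    (Finset.univ.filter (fun i => c i ≠ 0)).card = p + 1 →
    ∃ (φ : Fin n → Fin (p+1)) (ι : Fin (p+1) → Fin n), ValidBI c φ ι := by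
  intro n
  induction n with
  | zero =>
    intro p c h
    exact absurd h (by simp)
  | succ n ih =>
    intro p c hcard
    by_cases hc0 : c 0 = 0
    · have hcard' : (Finset.univ.filter (fun i : Fin n => c i.succ ≠ 0)).card = p + 1 := by
        rw [card_filter_succ, if_neg (not_not_intro hc0)] at hcard
        omega
      obtain ⟨φ', ι', h⟩ := ih p _ hcard'
      exact ⟨_, _, glue0 c hc0 h⟩
    · cases p with
      | zero =>
        have hz : ∀ i : Fin n, c i.succ = 0 := by
          rw [card_filter_succ, if_pos hc0] at hcard
          have hcc : (Finset.univ.filter (fun i : Fin n => c i.succ ≠ 0)).card = 0 := by omega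
          intro i
          by_contra hne
          have hmem : i ∈ Finset.univ.filter (fun i : Fin n => c i.succ ≠ 0) :=
            Finset.mem_filter.mpr ⟨Finset.mem_univ i, hne⟩
          rw [Finset.card_eq_zero.mp hcc] at hmem
          exact absurd hmem (Finset.notMem_empty i)
        refine ⟨fun _ => 0, fun _ => 0, monotone_const, fun _ => hc0,
          fun j => (Fin.fin_one_eq_zero j).symm, ?_⟩
        intro i hi
        induction i using Fin.cases with
        | zero => exact mul_self_pos.mpr hc0
        | succ i' => exact absurd (hz i') hi
      | succ p' =>
        have hcard' : (Finset.univ.filter (fun i : Fin n => c i.succ ≠ 0)).card = p' + 1 := by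
          rw [card_filter_succ, if_pos hc0] at hcard
          omega
        obtain ⟨φ', ι', h⟩ := ih p' _ hcard'
        exact ⟨_, _, glueShift c hc0 h⟩

lemma blocks : ∀ (n p : ℕ) (c : Fin n → ℝ),
    p + 1 ≤ (Finset.univ.filter (fun i => c i ≠ 0)).card → sMinus c ≤ p →
    ∃ (φ : Fin n → Fin (p+1)) (ι : Fin (p+1) → Fin n), ValidBI c φ ι := by
  intro n
  induction n with
  | zero =>
    intro p c h _
    have : (Finset.univ.filter (fun i : Fin 0 => c i ≠ 0)).card = 0 := by simp
    omega
  | succ n ih =>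
    intro p c hcard hsm
    by_cases hc0 : c 0 = 0
    · have hcard' : p + 1 ≤ (Finset.univ.filter (fun i : Fin n => c i.succ ≠ 0)).card := by
        rw [card_filter_succ, if_neg (not_not_intro hc0)] at hcard
        omega
      have hc'ne : ∃ i : Fin n, c i.succ ≠ 0 := by
        have : (Finset.univ.filter (fun i : Fin n => c i.succ ≠ 0)).Nonempty :=
          Finset.card_pos.mp (by omega)
        obtain ⟨i, hi⟩ := this
        exact ⟨i, (Finset.mem_filter.mp hi).2⟩
      have hsm' := sMinus_tail_le c hc'ne hsm
      obtain ⟨φ', ι', h⟩ := ih p _ hcard' hsm'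
      exact ⟨_, _, glue0 c hc0 h⟩
    · cases p with
      | zero =>
        refine ⟨fun _ => 0, fun _ => 0, monotone_const, fun _ => hc0,
          fun j => (Fin.fin_one_eq_zero j).symm, ?_⟩
        intro i hi
        rcases lt_trichotomy (c i * c 0) 0 with hlt | heq | hgt
        · exfalso
          have hine : i ≠ 0 := by
            intro h0
            rw [h0] at hlt
            nlinarith [mul_self_pos.mpr hc0]
          have hipos : (0 : Fin (n+1)) < i := Fin.pos_of_ne_zero hine
          have hmono1 : StrictMono (fun _ : Fin 1 => i) :=
            fun a b hab => absurd (Subsingleton.elim a b) (ne_of_lt hab)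
          have hmono : StrictMono (Fin.cases 0 (fun _ : Fin 1 => i) : Fin 2 → Fin (n+1)) :=
            strictMono_finCases 0 _ hmono1 hipos
          have hchain := chain_finCases c 0 (fun _ : Fin 1 => i)
            (fun k => k.elim0) (by simpa [mul_comm] using hlt)
          apply no_long_chain c hsm _ hmono ?_ hchain
          intro k
          induction k using Fin.cases with
          | zero => exact hc0
          | succ k' => simpa using hi
        · exact absurd heq (mul_ne_zero hi hc0)
        · exact hgt
      | succ p' =>
        have hcard0 : p' + 1 ≤ (Finset.univ.filter (fun i : Fin n => c i.succ ≠ 0)).card := by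
          rw [card_filter_succ, if_pos hc0] at hcard
          omega
        have hne' : (Finset.univ.filter (fun i : Fin n => c i.succ ≠ 0)).Nonempty :=
          Finset.card_pos.mp (by omega)
        set k₀ := (Finset.univ.filter (fun i : Fin n => c i.succ ≠ 0)).min' hne' with hk₀def
        have hk₀mem := (Finset.univ.filter (fun i : Fin n => c i.succ ≠ 0)).min'_mem hne'
        have hk₀ne : c k₀.succ ≠ 0 := (Finset.mem_filter.mp hk₀mem).2
        have hc'ne : ∃ i : Fin n, c i.succ ≠ 0 := ⟨k₀, hk₀ne⟩
        have hsm' : sMinus (fun i : Fin n => c i.succ) ≤ p' + 1 := sMinus_tail_le c hc'ne hsm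
        rcases lt_trichotomy (c 0 * c k₀.succ) 0 with hneg | hzero | hpos
        · -- boundary sign change
          have hsm'' : sMinus (fun i : Fin n => c i.succ) ≤ p' := by
            by_contra hgt
            push_neg at hgt
            obtain ⟨t', ht', h0', halt'⟩ := exists_chain_of_sMinus_ge (m := p'+1)
              (fun i : Fin n => c i.succ) hc'ne (by omega)
            set t2 : Fin (p'+2) → Fin (n+1) := fun k => (t' k).succ with ht2def
            have ht2 : StrictMono t2 := fun a b hab => Fin.succ_lt_succ_iff.mpr (ht' hab)
            have h02 : ∀ k, c (t2 k) ≠ 0 := h0'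
            have halt2 : ∀ k : Fin (p'+1), c (t2 k.castSucc) * c (t2 k.succ) < 0 := halt'
            rcases lt_trichotomy (c 0 * c (t2 0)) 0 with hx | hx | hx
            · apply no_long_chain c hsm (Fin.cases 0 t2)
                (strictMono_finCases _ _ ht2 (Fin.succ_pos _)) ?_
                (chain_finCases c 0 t2 halt2 hx)
              intro k
              induction k using Fin.cases with
              | zero => exact hc0
              | succ k' => simpa using h02 k'
            · exact absurd hx (mul_ne_zero hc0 (h02 0))
            · -- c (t2 0) has the sign of c 0, opposite to c k₀.succ
              have hk₀t : c k₀.succ * c (t2 0) < 0 :=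
                sign_mul_neg_trans (by linarith [mul_comm (c 0) (c k₀.succ)]) hx
              have hk₀lt : k₀.succ < t2 0 := by
                have hle : k₀ ≤ t' 0 :=
                  Finset.min'_le (Finset.univ.filter (fun i : Fin n => c i.succ ≠ 0)) (t' 0)
                    (Finset.mem_filter.mpr ⟨Finset.mem_univ _, h0' 0⟩)
                have hne2 : k₀ ≠ t' 0 := by
                  intro he
                  rw [ht2def] at hk₀t
                  simp only at hk₀t
                  rw [← he] at hk₀t
                  nlinarith [mul_self_pos.mpr hk₀ne]
                exact Fin.succ_lt_succ_iff.mpr (lt_of_le_of_ne hle hne2)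
              set t3 : Fin (p'+3) → Fin (n+1) := Fin.cases k₀.succ t2 with ht3def
              have ht3 : StrictMono t3 := strictMono_finCases _ _ ht2 hk₀lt
              have h03 : ∀ k, c (t3 k) ≠ 0 := by
                intro k
                induction k using Fin.cases with
                | zero => exact hk₀ne
                | succ k' => simpa [ht3def] using h02 k'
              have halt3 := chain_finCases c k₀.succ t2 halt2 hk₀t
              have h0lt : (0 : Fin (n+1)) < t3 0 := by
                simp only [ht3def, Fin.cases_zero]
                exact Fin.succ_pos _
              have hfirst4 : c 0 * c (t3 0) < 0 := by
                simp only [ht3def, Fin.cases_zero]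
                exact hneg
              apply no_long_chain c (p := p'+2) (by omega) (Fin.cases 0 t3)
                (strictMono_finCases _ _ ht3 h0lt) ?_
                (chain_finCases c 0 t3 halt3 hfirst4)
              intro k
              induction k using Fin.cases with
              | zero => exact hc0
              | succ k' => simpa using h03 k'
          obtain ⟨φ', ι', h⟩ := ih p' _ (by omega) hsm''
          exact ⟨_, _, glueShift c hc0 h⟩
        · exact absurd hzero (mul_ne_zero hc0 hk₀ne)
        · -- no boundary sign change
          by_cases hbig : p' + 2 ≤ (Finset.univ.filter (fun i : Fin n => c i.succ ≠ 0)).card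
          · obtain ⟨φ', ι', h⟩ := ih (p'+1) _ hbig hsm'
            obtain ⟨hmono, hrep, hφι, hsign⟩ := h
            have hι0mem : ι' 0 ∈ Finset.univ.filter (fun i : Fin n => c i.succ ≠ 0) :=
              Finset.mem_filter.mpr ⟨Finset.mem_univ _, hrep 0⟩
            have hk₀le : k₀ ≤ ι' 0 :=
              Finset.min'_le (Finset.univ.filter (fun i : Fin n => c i.succ ≠ 0)) (ι' 0) hι0mem
            have hφk₀ : φ' k₀ = 0 := by
              have h1 : φ' k₀ ≤ φ' (ι' 0) := hmono hk₀le
              rw [hφι 0] at h1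
              exact Fin.le_zero_iff.mp h1
            have hsgn0 : 0 < c k₀.succ * c (ι' (φ' k₀)).succ := hsign k₀ hk₀ne
            rw [hφk₀] at hsgn0
            have hfinal : 0 < c 0 * c (ι' 0).succ := sign_mul_trans hpos hsgn0
            exact ⟨_, _, glueSame c hc0 ⟨hmono, hrep, hφι, hsign⟩ hfinal⟩
          · have hexact : (Finset.univ.filter (fun i : Fin (n+1) => c i ≠ 0)).card = p' + 2 := by
              rw [card_filter_succ, if_pos hc0]
              omega
            exact blocksExact _ _ c hexact

/-- The cyclically rotated vector `[x i, …, x (n-1), x 0, …, x i]` (of length `n+1`),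
as a list. -/
noncomputable def rotList {n : ℕ} (x : Fin n → ℝ) (i : Fin n) : List ℝ :=
  (List.ofFn x).rotate i.val ++ [x i]

/-- The cyclic sign variation count `s_c⁻(x)`: the maximum of `s⁻` over all
cyclic rotations `[x i, …, x (n-1), x 0, …, x i]`. -/
noncomputable def sMinusC {n : ℕ} (x : Fin n → ℝ) : ℕ :=
  Finset.univ.sup fun i : Fin n => sMinusList (rotList x i)

/-- The cyclic sign variation count `s_c⁺(x)`: the maximum of `s⁺` over all
cyclic rotations, where the two copies of the entry `x i` at the two ends of a
rotation are replaced by the same sign. -/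
noncomputable def sPlusC {n : ℕ} (x : Fin n → ℝ) : ℕ :=
  Finset.univ.sup fun p : (Fin n → Bool) × Fin n =>
    signChanges (rotList (replZeros x p.1) p.2)

/-- `A` is strictly sign-regular of order `k` (`SSR_k`): all `k×k` minors are
nonzero and have the same sign. -/
def SSRof {n m : ℕ} (A : Matrix (Fin n) (Fin m) ℝ) (k : ℕ) : Prop :=
  (∀ (α : Fin k → Fin n) (β : Fin k → Fin m), StrictMono α → StrictMono β →
      0 < (A.submatrix α β).det) ∨
  (∀ (α : Fin k → Fin n) (β : Fin k → Fin m), StrictMono α → StrictMono β →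
      (A.submatrix α β).det < 0)

open Matrix in
/-- Expansion of minors of the block-collapsed matrix. -/
lemma block_minor_expansion {n p : ℕ} (A : Matrix (Fin n) (Fin n) ℝ) (c : Fin n → ℝ)
    (φ : Fin n → Fin (p+1)) (ρ : Fin (p+1) → Fin n) :
    ((Matrix.of fun t j => ∑ i ∈ Finset.univ.filter (fun i => φ i = j),
        |c i| * A t i : Matrix (Fin n) (Fin (p+1)) ℝ).submatrix ρ id).det =
      ∑ r ∈ Fintype.piFinset (fun j : Fin (p+1) => Finset.univ.filter (fun i => φ i = j)),
        (∏ j, |c (r j)|) * (A.submatrix ρ r).det := by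
  classical
  rw [← Matrix.det_transpose]
  have hrows : ((Matrix.of fun t j => ∑ i ∈ Finset.univ.filter (fun i => φ i = j),
      |c i| * A t i : Matrix (Fin n) (Fin (p+1)) ℝ).submatrix ρ id)ᵀ =
      fun j => ∑ i ∈ Finset.univ.filter (fun i => φ i = j),
        |c i| • (fun a => A (ρ a) i) := by
    ext j a
    simp only [Matrix.transpose_apply, Matrix.submatrix_apply, Matrix.of_apply, id_eq]
    rw [Finset.sum_apply]
    simp [smul_eq_mul]
  rw [hrows]
  have hdet : ∀ X : Matrix (Fin (p+1)) (Fin (p+1)) ℝ,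
      X.det = Matrix.detRowAlternating X := fun _ => rfl
  refine (hdet _).trans ?_
  have := (Matrix.detRowAlternating (n := Fin (p+1)) (R := ℝ)).toMultilinearMap.map_sum_finset
    (fun j i => |c i| • (fun a => A (ρ a) i))
    (fun j : Fin (p+1) => Finset.univ.filter (fun i => φ i = j))
  rw [show ((Matrix.detRowAlternating (n := Fin (p+1)) (R := ℝ)).toMultilinearMap
      (fun j => ∑ i ∈ Finset.univ.filter (fun i => φ i = j), |c i| • (fun a => A (ρ a) i)))
      = Matrix.detRowAlternating (fun j => ∑ i ∈ Finset.univ.filter (fun i => φ i = j),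
          |c i| • (fun a => A (ρ a) i)) from rfl] at this
  rw [this]
  apply Finset.sum_congr rfl
  intro r _
  have hsmul := (Matrix.detRowAlternating (n := Fin (p+1)) (R := ℝ)).toMultilinearMap.map_smul_univ
    (fun j => |c (r j)|) (fun j => (fun a => A (ρ a) (r j)))
  rw [hsmul, smul_eq_mul]
  congr 1
  have heq : (fun j => (fun a => A (ρ a) (r j))) = (A.submatrix ρ r)ᵀ := by
    ext j a
    simp [Matrix.transpose, Matrix.submatrix]
  have h2 : ((Matrix.detRowAlternating (n := Fin (p+1)) (R := ℝ)).toMultilinearMap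
      (fun j => (fun a => A (ρ a) (r j))) : ℝ) = ((A.submatrix ρ r)ᵀ).det := by
    rw [heq]
    rfl
  rw [h2, Matrix.det_transpose]

lemma VDP_of_SSR {n p : ℕ} (A : Matrix (Fin n) (Fin n) ℝ) (hp : p < n)
    (hSSR : SSRof A (p+1)) (c : Fin n → ℝ) (hc : c ≠ 0) (hsm : sMinus c ≤ p) :
    sPlus (A.mulVec c) ≤ p := by
  classical
  have hcne : ∃ i, c i ≠ 0 := Function.ne_iff.mp hc
  by_cases hsmall : (Finset.univ.filter (fun i => c i ≠ 0)).card ≤ p + 1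
  · obtain ⟨T, hST, hT⟩ := Finset.exists_superset_card_eq hsmall (by simpa using hp)
    set β : Fin (p+1) → Fin n := fun j => (T.orderIsoOfFin hT j : Fin n) with hβdef
    have hβ : StrictMono β := fun a b hab =>
      Subtype.coe_lt_coe.mpr ((T.orderIsoOfFin hT).strictMono hab)
    have himg : Finset.univ.image β = T := by
      apply Finset.eq_of_subset_of_card_le
      · intro x hx
        obtain ⟨j, -, rfl⟩ := Finset.mem_image.mp hx
        exact (T.orderIsoOfFin hT j).2
      · rw [Finset.card_image_of_injective _ hβ.injective, Finset.card_univ, Fintype.card_fin, hT]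
    have hzero : ∀ i ∉ T, c i = 0 := by
      intro i hiT
      by_contra hne
      exact hiT (hST (Finset.mem_filter.mpr ⟨Finset.mem_univ _, hne⟩))
    have hy : A.mulVec c = (A.submatrix id β).mulVec (fun j => c (β j)) := by
      ext r
      show (∑ i, A r i * c i) = ∑ j, A r (β j) * c (β j)
      rw [← Finset.sum_subset (Finset.subset_univ T) (fun x _ hx => by rw [hzero x hx]; ring)]
      rw [← himg, Finset.sum_image (fun a _ b _ h => hβ.injective h)]
    rw [hy]
    apply key_lemma
    · have hrw : ∀ ρ : Fin (p+1) → Fin n,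
          ((A.submatrix id β).submatrix ρ id) = A.submatrix ρ β := by
        intro ρ
        ext a b
        simp [Matrix.submatrix]
      rcases hSSR with hpos | hneg
      · left
        intro ρ hρ
        rw [hrw ρ]
        exact hpos ρ β hρ hβ
      · right
        intro ρ hρ
        rw [hrw ρ]
        exact hneg ρ β hρ hβ
    · obtain ⟨i, hi⟩ := hcne
      have hiT : i ∈ T := hST (Finset.mem_filter.mpr ⟨Finset.mem_univ _, hi⟩)
      rw [← himg] at hiT
      obtain ⟨j, -, hji⟩ := Finset.mem_image.mp hiT
      intro h0
      have := congrFun h0 j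
      rw [hji] at this
      exact hi this
  · push_neg at hsmall
    obtain ⟨φ, ι, hmono, hrep, hφι, hsign⟩ := blocks n p c (by omega) hsm
    set σv : Fin (p+1) → ℝ := fun j => if 0 < c (ι j) then (1:ℝ) else -1 with hσvdef
    set B : Matrix (Fin n) (Fin (p+1)) ℝ :=
      Matrix.of fun t j => ∑ i ∈ Finset.univ.filter (fun i => φ i = j), |c i| * A t i with hBdef
    have habs : ∀ i, σv (φ i) * |c i| = c i := by
      intro i
      by_cases hci : c i = 0
      · rw [hci]
        simp
      · have hs := hsign i hci
        by_cases hpos' : 0 < c (ι (φ i))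
        · have hcip : 0 < c i := by
            rcases mul_pos_iff.mp hs with ⟨h1, h2⟩ | ⟨h1, h2⟩
            · exact h1
            · linarith
          rw [hσvdef]
          simp only [hpos', if_pos]
          rw [abs_of_pos hcip, one_mul]
        · have hneg' : c (ι (φ i)) < 0 :=
            lt_of_le_of_ne (not_lt.mp hpos') (hrep (φ i))
          have hcin : c i < 0 := by
            rcases mul_pos_iff.mp hs with ⟨h1, h2⟩ | ⟨h1, h2⟩
            · linarith
            · exact h1
          rw [hσvdef]
          simp only [hpos', if_neg, not_false_iff]
          rw [abs_of_neg hcin]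
          ring
    have hSMgen : ∀ r : Fin (p+1) → Fin n, (∀ j, φ (r j) = j) → StrictMono r := by
      intro r hr a b hab
      by_contra hle
      push_neg at hle
      have h2 := hmono hle
      rw [hr, hr] at h2
      exact absurd h2 (not_le_of_gt hab)
    have hιSM : StrictMono ι := hSMgen ι hφι
    have hy : A.mulVec c = B.mulVec σv := by
      ext r
      show (∑ i, A r i * c i) = ∑ j, B r j * σv j
      have hterm : ∀ j, B r j * σv j =
          ∑ i ∈ Finset.univ.filter (fun i => φ i = j), A r i * c i := by
        intro j
        rw [hBdef]
        show (∑ i ∈ Finset.univ.filter (fun i => φ i = j), |c i| * A r i) * σv j = _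
        rw [Finset.sum_mul]
        apply Finset.sum_congr rfl
        intro i hi
        have hfij : φ i = j := (Finset.mem_filter.mp hi).2
        rw [← hfij]
        calc |c i| * A r i * σv (φ i) = A r i * (σv (φ i) * |c i|) := by ring
          _ = A r i * c i := by rw [habs]
      simp_rw [hterm]
      rw [Finset.sum_fiberwise]
    rw [hy]
    apply key_lemma
    · rcases hSSR with hpos | hneg
      · left
        intro ρ hρ
        rw [hBdef, block_minor_expansion A c φ ρ]
        apply Finset.sum_pos'
        · intro r hr
          have hφr : ∀ j, φ (r j) = j :=
            fun j => (Finset.mem_filter.mp (Fintype.mem_piFinset.mp hr j)).2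
          exact mul_nonneg (Finset.prod_nonneg fun j _ => abs_nonneg _)
            (hpos ρ r hρ (hSMgen r hφr)).le
        · refine ⟨ι, ?_, ?_⟩
          · rw [Fintype.mem_piFinset]
            intro j
            exact Finset.mem_filter.mpr ⟨Finset.mem_univ _, hφι j⟩
          · exact mul_pos (Finset.prod_pos fun j _ => abs_pos.mpr (hrep j))
              (hpos ρ ι hρ hιSM)
      · right
        intro ρ hρ
        rw [hBdef, block_minor_expansion A c φ ρ]
        have hposneg : 0 < ∑ r ∈ Fintype.piFinset
            (fun j : Fin (p+1) => Finset.univ.filter (fun i => φ i = j)),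
            (∏ j, |c (r j)|) * (-(A.submatrix ρ r).det) := by
          apply Finset.sum_pos'
          · intro r hr
            have hφr : ∀ j, φ (r j) = j :=
              fun j => (Finset.mem_filter.mp (Fintype.mem_piFinset.mp hr j)).2
            exact mul_nonneg (Finset.prod_nonneg fun j _ => abs_nonneg _)
              (by linarith [hneg ρ r hρ (hSMgen r hφr)])
          · refine ⟨ι, ?_, ?_⟩
            · rw [Fintype.mem_piFinset]
              intro j
              exact Finset.mem_filter.mpr ⟨Finset.mem_univ _, hφι j⟩
            · exact mul_pos (Finset.prod_pos fun j _ => abs_pos.mpr (hrep j))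
                (by linarith [hneg ρ ι hρ hιSM])
        have hEq : ∑ r ∈ Fintype.piFinset
            (fun j : Fin (p+1) => Finset.univ.filter (fun i => φ i = j)),
            (∏ j, |c (r j)|) * (-(A.submatrix ρ r).det) =
            - ∑ r ∈ Fintype.piFinset
            (fun j : Fin (p+1) => Finset.univ.filter (fun i => φ i = j)),
            (∏ j, |c (r j)|) * ((A.submatrix ρ r).det) := by
          rw [← Finset.sum_neg_distrib]
          apply Finset.sum_congr rfl
          intro r _
          ring
        rw [hEq] at hposneg
        linarith
    · intro h0
      have := congrFun h0 0
      rw [hσvdef] at this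
      by_cases hcp : 0 < c (ι 0)
      · simp [hcp] at this
      · simp [hcp] at this

lemma fin_strictMono_id {m : ℕ} (f : Fin m → Fin m) (hf : StrictMono f) : f = id := by
  apply (StrictMono.range_inj hf strictMono_id).mp
  rw [Set.range_id]
  apply Set.range_eq_univ.mpr
  exact Finite.surjective_of_injective hf.injective

lemma adj_to_all {p : ℕ} (N : Fin (p+2) → ℝ) (h0 : ∀ k, N k ≠ 0)
    (hadj : ∀ k : Fin (p+1), 0 < N k.castSucc * N k.succ) :
    ∀ k l, 0 < N k * N l := by
  have hzero : ∀ k, 0 < N 0 * N k := by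
    intro k
    induction k using Fin.induction with
    | zero => exact mul_self_pos.mpr (h0 0)
    | succ i ih => exact sign_mul_trans ih (hadj i)
  intro k l
  exact sign_mul_trans (by linarith [mul_comm (N 0) (N k), hzero k]) (hzero l)

/-- The strictly monotone enumeration of a finite set of `Fin n`. -/
noncomputable def enumOf {n : ℕ} (T : Finset (Fin n)) {k : ℕ} (h : T.card = k) :
    Fin k → Fin n := fun j => (T.orderIsoOfFin h j : Fin n)

lemma enumOf_strictMono {n : ℕ} (T : Finset (Fin n)) {k : ℕ} (h : T.card = k) :
    StrictMono (enumOf T h) := fun a b hab =>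
  Subtype.coe_lt_coe.mpr ((T.orderIsoOfFin h).strictMono hab)

lemma enumOf_mem {n : ℕ} (T : Finset (Fin n)) {k : ℕ} (h : T.card = k) (j : Fin k) :
    enumOf T h j ∈ T := (T.orderIsoOfFin h j).2

lemma enumOf_image {n : ℕ} (T : Finset (Fin n)) {k : ℕ} (h : T.card = k) :
    Finset.univ.image (enumOf T h) = T := by
  apply Finset.eq_of_subset_of_card_le
  · intro x hx
    obtain ⟨j, -, rfl⟩ := Finset.mem_image.mp hx
    exact enumOf_mem T h j
  · rw [Finset.card_image_of_injective _ (enumOf_strictMono T h).injective,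
      Finset.card_univ, Fintype.card_fin, h]

lemma strictMono_eq_of_image_eq {n k : ℕ} {f g : Fin k → Fin n} (hf : StrictMono f)
    (hg : StrictMono g) (h : Finset.univ.image f = Finset.univ.image g) : f = g := by
  apply (StrictMono.range_inj hf hg).mp
  have h1 : Set.range f = ↑(Finset.univ.image f) := by
    rw [Finset.coe_image, Finset.coe_univ, Set.image_univ]
  have h2 : Set.range g = ↑(Finset.univ.image g) := by
    rw [Finset.coe_image, Finset.coe_univ, Set.image_univ]
  rw [h1, h2, h]

lemma image_enum_succAbove {n m : ℕ} (T : Finset (Fin n)) (h : T.card = m + 1)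
    (e : Fin (m+1)) :
    Finset.univ.image (fun a => enumOf T h (e.succAbove a)) = T.erase (enumOf T h e) := by
  apply Finset.eq_of_subset_of_card_le
  · intro x hx
    obtain ⟨a, -, rfl⟩ := Finset.mem_image.mp hx
    apply Finset.mem_erase.mpr
    refine ⟨?_, enumOf_mem T h _⟩
    intro heq
    have := (enumOf_strictMono T h).injective heq
    exact Fin.succAbove_ne e a this
  · have hinj : Function.Injective (fun a => enumOf T h (e.succAbove a)) :=
      ((enumOf_strictMono T h).comp (Fin.strictMono_succAbove e)).injective
    rw [Finset.card_image_of_injective _ hinj,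
      Finset.card_univ, Fintype.card_fin, Finset.card_erase_of_mem (enumOf_mem T h e), h]
    omega

/-- Generic connectivity over (p+1)-element index tuples. -/
lemma connect {n p : ℕ} (D : (Fin (p+1) → Fin n) → ℝ)
    (hD0 : ∀ β, StrictMono β → D β ≠ 0)
    (hstep : ∀ γ : Fin (p+2) → Fin n, StrictMono γ →
      ∀ k l, 0 < D (fun a => γ (Fin.succAbove k a)) * D (fun a => γ (Fin.succAbove l a))) :
    ∀ β β', StrictMono β → StrictMono β' → 0 < D β * D β' := by
  have main : ∀ d (β β' : Fin (p+1) → Fin n), StrictMono β → StrictMono β' →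
      (Finset.univ.image β' \ Finset.univ.image β).card ≤ d → 0 < D β * D β' := by
    intro d
    induction d with
    | zero =>
      intro β β' hβ hβ' hcard
      have hsub : Finset.univ.image β' ⊆ Finset.univ.image β :=
        Finset.sdiff_eq_empty_iff_subset.mp (Finset.card_eq_zero.mp (Nat.le_zero.mp hcard))
      have heq : Finset.univ.image β' = Finset.univ.image β := by
        apply Finset.eq_of_subset_of_card_le hsub
        rw [Finset.card_image_of_injective _ hβ.injective,
          Finset.card_image_of_injective _ hβ'.injective]
      have : β' = β := strictMono_eq_of_image_eq hβ' hβ heq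
      rw [this]
      exact mul_self_pos.mpr (hD0 β hβ)
    | succ d ih =>
      intro β β' hβ hβ' hcard
      by_cases hempty : Finset.univ.image β' \ Finset.univ.image β = ∅
      · have hsub : Finset.univ.image β' ⊆ Finset.univ.image β :=
          Finset.sdiff_eq_empty_iff_subset.mp hempty
        have heq : Finset.univ.image β' = Finset.univ.image β := by
          apply Finset.eq_of_subset_of_card_le hsub
          rw [Finset.card_image_of_injective _ hβ.injective,
            Finset.card_image_of_injective _ hβ'.injective]
        have : β' = β := strictMono_eq_of_image_eq hβ' hβ heq
        rw [this]
        exact mul_self_pos.mpr (hD0 β hβ)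
      · obtain ⟨x, hx⟩ := Finset.nonempty_iff_ne_empty.mpr hempty
        have hxβ' : x ∈ Finset.univ.image β' := (Finset.mem_sdiff.mp hx).1
        have hxβ : x ∉ Finset.univ.image β := (Finset.mem_sdiff.mp hx).2
        -- find z ∈ image β \ image β'
        have hzex : (Finset.univ.image β \ Finset.univ.image β').Nonempty := by
          rw [Finset.nonempty_iff_ne_empty]
          intro hz
          have hsub : Finset.univ.image β ⊆ Finset.univ.image β' :=
            Finset.sdiff_eq_empty_iff_subset.mp hz
          have heq : Finset.univ.image β = Finset.univ.image β' := by
            apply Finset.eq_of_subset_of_card_le hsub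
            rw [Finset.card_image_of_injective _ hβ.injective,
              Finset.card_image_of_injective _ hβ'.injective]
          rw [← heq] at hxβ'
          exact hxβ hxβ'
        obtain ⟨z, hz⟩ := hzex
        have hzβ : z ∈ Finset.univ.image β := (Finset.mem_sdiff.mp hz).1
        have hzβ' : z ∉ Finset.univ.image β' := (Finset.mem_sdiff.mp hz).2
        set T : Finset (Fin n) := insert x (Finset.univ.image β) with hTdef
        have hTcard : T.card = p + 2 := by
          rw [hTdef, Finset.card_insert_of_notMem hxβ,
            Finset.card_image_of_injective _ hβ.injective, Finset.card_univ, Fintype.card_fin]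
        set γ := enumOf T hTcard with hγdef
        have hγ : StrictMono γ := enumOf_strictMono T hTcard
        have hxT : x ∈ T := Finset.mem_insert_self x _
        have hzT : z ∈ T := Finset.mem_insert_of_mem hzβ
        set k := (T.orderIsoOfFin hTcard).symm ⟨x, hxT⟩ with hkdef
        set l := (T.orderIsoOfFin hTcard).symm ⟨z, hzT⟩ with hldef
        have hγk : γ k = x := by
          rw [hγdef, hkdef]
          show ((T.orderIsoOfFin hTcard) ((T.orderIsoOfFin hTcard).symm ⟨x, hxT⟩) : Fin n) = x
          rw [OrderIso.apply_symm_apply]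
        have hγl : γ l = z := by
          rw [hγdef, hldef]
          show ((T.orderIsoOfFin hTcard) ((T.orderIsoOfFin hTcard).symm ⟨z, hzT⟩) : Fin n) = z
          rw [OrderIso.apply_symm_apply]
        have hβeq : (fun a => γ (Fin.succAbove k a)) = β := by
          apply strictMono_eq_of_image_eq (f := fun a => γ (Fin.succAbove k a))
            (hγ.comp (Fin.strictMono_succAbove k)) hβ
          rw [image_enum_succAbove T hTcard k]
          show T.erase (γ k) = _
          rw [hγk, hTdef, Finset.erase_insert hxβ]
        set β'' : Fin (p+1) → Fin n := fun a => γ (Fin.succAbove l a) with hβ''def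
        have hβ'' : StrictMono β'' := hγ.comp (Fin.strictMono_succAbove l)
        have himgβ'' : Finset.univ.image β'' = T.erase z := by
          rw [hβ''def, image_enum_succAbove T hTcard l]
          show T.erase (γ l) = _
          rw [hγl]
        have hstep1 : 0 < D β * D β'' := by
          have := hstep γ hγ k l
          rwa [hβeq] at this
        have hmeasure : (Finset.univ.image β' \ Finset.univ.image β'').card ≤ d := by
          have hsub2 : Finset.univ.image β' \ Finset.univ.image β'' ⊆
              (Finset.univ.image β' \ Finset.univ.image β).erase x := by
            intro j hj
            obtain ⟨hjβ', hjβ''⟩ := Finset.mem_sdiff.mp hj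
            rw [himgβ'', hTdef] at hjβ''
            apply Finset.mem_erase.mpr
            constructor
            · intro hjx
              apply hjβ''
              apply Finset.mem_erase.mpr
              refine ⟨?_, by rw [hjx]; exact hxT⟩
              intro hjz
              rw [hjx] at hjz hjβ'
              rw [← hjz] at hzβ'
              exact hzβ' hjβ'
            · apply Finset.mem_sdiff.mpr
              refine ⟨hjβ', ?_⟩
              intro hjβ
              apply hjβ''
              apply Finset.mem_erase.mpr
              constructor
              · intro hjz
                rw [hjz] at hjβ'
                exact hzβ' hjβ'
              · exact Finset.mem_insert_of_mem hjβ
          have h1 := Finset.card_le_card hsub2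
          have h2 : ((Finset.univ.image β' \ Finset.univ.image β).erase x).card =
              (Finset.univ.image β' \ Finset.univ.image β).card - 1 :=
            Finset.card_erase_of_mem hx
          omega
        have hstep2 : 0 < D β'' * D β' := ih β'' β' hβ'' hβ' hmeasure
        exact sign_mul_trans hstep1 hstep2
  intro β β' hβ hβ'
  exact main _ β β' hβ hβ' le_rfl

lemma minors_ne_zero {n p : ℕ} (A : Matrix (Fin n) (Fin n) ℝ)
    (hVDP : ∀ c : Fin n → ℝ, c ≠ 0 → sMinus c ≤ p → sPlus (A.mulVec c) ≤ p)
    (hn : p + 2 ≤ n) :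
    ∀ (α β : Fin (p+1) → Fin n), StrictMono α → StrictMono β →
      (A.submatrix α β).det ≠ 0 := by
  intro α β hα hβ hdet0
  obtain ⟨ξ, hξne, hξ0⟩ := (Matrix.exists_mulVec_eq_zero_iff).mpr hdet0
  set c := extVec β ξ with hcdef
  have hcβ : ∀ j, c (β j) = ξ j := extVec_apply β hβ.injective ξ
  have hcne : c ≠ 0 := by
    obtain ⟨j, hj⟩ := Function.ne_iff.mp hξne
    intro h0
    have := congrFun h0 (β j)
    rw [hcβ j] at this
    exact hj this
  have hsm : sMinus c ≤ p := sMinus_le_of_supp c (Finset.univ.image β)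
    (by rw [Finset.card_image_of_injective _ hβ.injective, Finset.card_univ, Fintype.card_fin])
    (fun i h => extVec_supp β ξ i h)
  have hyzero : ∀ r, (A.mulVec c) (α r) = 0 := by
    intro r
    rw [hcdef, mulVec_extVec]
    have hmv : ∑ j, A (α r) (β j) * ξ j = (A.submatrix α β).mulVec ξ r := by
      simp [Matrix.mulVec, dotProduct, Matrix.submatrix]
    rw [hmv, hξ0]
    rfl
  have hSim : (Finset.univ.image α).card = p + 1 := by
    rw [Finset.card_image_of_injective _ hα.injective, Finset.card_univ, Fintype.card_fin]
  have hge := sPlus_ge_of_zeros (A.mulVec c) (Finset.univ.image α) hSim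
    (by intro i hi
        obtain ⟨r, -, rfl⟩ := Finset.mem_image.mp hi
        exact hyzero r) hn
  have hle := hVDP c hcne hsm
  omega

lemma cols_adjacent {n p : ℕ} (A : Matrix (Fin n) (Fin n) ℝ)
    (hVDP : ∀ c : Fin n → ℝ, c ≠ 0 → sMinus c ≤ p → sPlus (A.mulVec c) ≤ p)
    (hn : p + 2 ≤ n)
    (α : Fin (p+1) → Fin n) (hα : StrictMono α)
    (γ : Fin (p+2) → Fin n) (hγ : StrictMono γ) :
    ∀ k l : Fin (p+2), 0 < (A.submatrix α (fun a => γ (Fin.succAbove k a))).det *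
        (A.submatrix α (fun a => γ (Fin.succAbove l a))).det := by
  have hne := minors_ne_zero A hVDP hn
  set N : Fin (p+2) → ℝ :=
    fun k => (A.submatrix α (fun a => γ (Fin.succAbove k a))).det with hNdef
  have hN0 : ∀ k, N k ≠ 0 := fun k =>
    hne α _ hα (hγ.comp (Fin.strictMono_succAbove k))
  apply adj_to_all N hN0
  intro k
  set w : Fin (p+2) → ℝ := fun q => (-1)^(q:ℕ) * N q with hwdef
  set c := extVec γ w with hcdef
  have hw0 : ∀ q, w q ≠ 0 :=
    fun q => mul_ne_zero (pow_ne_zero _ (by norm_num)) (hN0 q)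
  have hcγ : ∀ q, c (γ q) = w q := extVec_apply γ hγ.injective w
  have hcne : c ≠ 0 := by
    intro h0
    apply hw0 0
    rw [← hcγ 0]
    exact congrFun h0 (γ 0)
  have hyzero : ∀ r, (A.mulVec c) (α r) = 0 := by
    intro r
    rw [hcdef, mulVec_extVec]
    have hcof := sum_cofactor_eq_zero (Matrix.of fun a b => A (α a) (γ b)) r
    have hdetq : ∀ q : Fin (p+2),
        ((Matrix.of fun a b => A (α a) (γ b)).submatrix id q.succAbove).det = N q := by
      intro q
      rfl
    calc ∑ q, A (α r) (γ q) * w q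
        = ∑ q : Fin (p+2), (-1:ℝ)^(q:ℕ) * (Matrix.of fun a b => A (α a) (γ b)) r q *
            ((Matrix.of fun a b => A (α a) (γ b)).submatrix id q.succAbove).det := by
          apply Finset.sum_congr rfl
          intro q _
          rw [hdetq q, hwdef]
          simp only [Matrix.of_apply]
          ring
      _ = 0 := hcof
  have hSim : (Finset.univ.image α).card = p + 1 := by
    rw [Finset.card_image_of_injective _ hα.injective, Finset.card_univ, Fintype.card_fin]
  have hsm : p + 1 ≤ sMinus c := by
    by_contra hsmle
    push_neg at hsmle
    have hle := hVDP c hcne (by omega)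
    have hge := sPlus_ge_of_zeros (A.mulVec c) (Finset.univ.image α) hSim
      (by intro i hi
          obtain ⟨r, -, rfl⟩ := Finset.mem_image.mp hi
          exact hyzero r) hn
    omega
  obtain ⟨t, ht, h0, halt⟩ := exists_chain_of_sMinus_ge (m := p+1) c
    ⟨γ 0, by rw [hcγ]; exact hw0 0⟩ hsm
  have htγ : t = γ := by
    apply strictMono_eq_of_image_eq ht hγ
    apply Finset.eq_of_subset_of_card_le
    · intro x hx
      obtain ⟨q, -, rfl⟩ := Finset.mem_image.mp hx
      exact extVec_supp γ w _ (h0 q)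
    · rw [Finset.card_image_of_injective _ hγ.injective,
        Finset.card_image_of_injective _ ht.injective]
  have hwprod := halt k
  rw [htγ] at hwprod
  rw [hcγ, hcγ] at hwprod
  have hcast : ((k.castSucc : Fin (p+2)) : ℕ) = (k : ℕ) := rfl
  have hsucc : ((k.succ : Fin (p+2)) : ℕ) = (k : ℕ) + 1 := rfl
  rw [hwdef] at hwprod
  simp only [hcast, hsucc] at hwprod
  have hp2 : (-1:ℝ)^((k:ℕ)) * (-1:ℝ)^((k:ℕ)+1) = -1 := by
    rw [← pow_add]
    exact Odd.neg_one_pow ⟨(k:ℕ), by ring⟩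
  have hkey : ((-1:ℝ)^((k:ℕ)) * N k.castSucc) * ((-1:ℝ)^((k:ℕ)+1) * N k.succ) =
      -(N k.castSucc * N k.succ) := by
    calc ((-1:ℝ)^((k:ℕ)) * N k.castSucc) * ((-1:ℝ)^((k:ℕ)+1) * N k.succ)
        = ((-1:ℝ)^((k:ℕ)) * (-1:ℝ)^((k:ℕ)+1)) * (N k.castSucc * N k.succ) := by ring
      _ = -(N k.castSucc * N k.succ) := by rw [hp2]; ring
  rw [hkey] at hwprod
  linarith

lemma rows_adjacent {n p : ℕ} (A : Matrix (Fin n) (Fin n) ℝ)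
    (hVDP : ∀ c : Fin n → ℝ, c ≠ 0 → sMinus c ≤ p → sPlus (A.mulVec c) ≤ p)
    (hn : p + 2 ≤ n)
    (β : Fin (p+1) → Fin n) (hβ : StrictMono β)
    (δ : Fin (p+2) → Fin n) (hδ : StrictMono δ) :
    ∀ k l : Fin (p+2), 0 < (A.submatrix (fun a => δ (Fin.succAbove k a)) β).det *
        (A.submatrix (fun a => δ (Fin.succAbove l a)) β).det := by
  classical
  have hne := minors_ne_zero A hVDP hn
  set M : Fin (p+2) → ℝ :=
    fun k => (A.submatrix (fun a => δ (Fin.succAbove k a)) β).det with hMdef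
  have hM0 : ∀ k, M k ≠ 0 := fun k =>
    hne _ β (hδ.comp (Fin.strictMono_succAbove k)) hβ
  apply adj_to_all M hM0
  intro k
  by_contra hcon
  have hprodne : M k.castSucc * M k.succ ≠ 0 := mul_ne_zero (hM0 _) (hM0 _)
  have hprod : M k.castSucc * M k.succ < 0 :=
    lt_of_le_of_ne (not_lt.mp hcon) hprodne
  set w : Fin (p+2) → ℝ := fun q => (-1)^(q:ℕ) * M q with hwdef
  have hw0 : ∀ q, w q ≠ 0 :=
    fun q => mul_ne_zero (pow_ne_zero _ (by norm_num)) (hM0 q)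
  have hcast : ((k.castSucc : Fin (p+2)) : ℕ) = (k : ℕ) := rfl
  have hsucc : ((k.succ : Fin (p+2)) : ℕ) = (k : ℕ) + 1 := rfl
  have hp2 : (-1:ℝ)^((k:ℕ)) * (-1:ℝ)^((k:ℕ)+1) = -1 := by
    rw [← pow_add]
    exact Odd.neg_one_pow ⟨(k:ℕ), by ring⟩
  have hwprod : 0 < w k.castSucc * w k.succ := by
    have hkey : w k.castSucc * w k.succ = -(M k.castSucc * M k.succ) := by
      rw [hwdef]
      simp only [hcast, hsucc]
      calc ((-1:ℝ)^((k:ℕ)) * M k.castSucc) * ((-1:ℝ)^((k:ℕ)+1) * M k.succ)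
          = ((-1:ℝ)^((k:ℕ)) * (-1:ℝ)^((k:ℕ)+1)) * (M k.castSucc * M k.succ) := by ring
        _ = -(M k.castSucc * M k.succ) := by rw [hp2]; ring
    rw [hkey]
    linarith
  set s : ℝ := if 0 < w k.castSucc then 1 else -1 with hsdef
  have hs0 : s ≠ 0 := by rw [hsdef]; split_ifs <;> norm_num
  have hssq : s * s = 1 := by rw [hsdef]; split_ifs <;> norm_num
  have hP : 0 < s * w k.castSucc := by
    rw [hsdef]
    split_ifs with h
    · linarith
    · have := lt_of_le_of_ne (not_lt.mp h) (hw0 k.castSucc)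
      nlinarith
  have hQ : 0 < s * w k.succ := sign_mul_trans hP hwprod
  set P : ℝ := s * w k.castSucc with hPdef
  set Q : ℝ := s * w k.succ with hQdef
  set E : ℝ := ∑ q ∈ (Finset.univ.erase k.castSucc).erase k.succ,
    w q * (s * ((-1:ℝ)^((q:ℕ)+(k:ℕ)))) with hEdef
  set a : ℝ := if 0 ≤ E then 1 else (Q - E) / P with hadef
  set b : ℝ := if 0 ≤ E then (P + E) / Q else 1 with hbdef
  have ha : 0 < a := by
    rw [hadef]
    split_ifs with h
    · norm_num
    · apply div_pos (by linarith) hP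
  have hb : 0 < b := by
    rw [hbdef]
    split_ifs with h
    · apply div_pos (by linarith) hQ
    · norm_num
  have habE : a * P - b * Q + E = 0 := by
    rw [hadef, hbdef]
    split_ifs with h
    · field_simp; ring
    · field_simp; ring
  set mfun : Fin (p+2) → ℝ :=
    fun q => if q = k.castSucc then a else if q = k.succ then b else 1 with hmdef
  have hne_sc : k.succ ≠ k.castSucc := (Fin.castSucc_lt_succ (i := k)).ne'
  have hmc : mfun k.castSucc = a := by simp [hmdef]
  have hms : mfun k.succ = b := by simp [hmdef, hne_sc]
  have hmo : ∀ q, q ≠ k.castSucc → q ≠ k.succ → mfun q = 1 := by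
    intro q h1 h2
    simp [hmdef, h1, h2]
  have hmpos : ∀ q, 0 < mfun q := by
    intro q
    by_cases h1 : q = k.castSucc
    · rw [h1, hmc]; exact ha
    · by_cases h2 : q = k.succ
      · rw [h2, hms]; exact hb
      · rw [hmo q h1 h2]; norm_num
  set v : Fin (p+2) → ℝ := fun q => s * (-1:ℝ)^((q:ℕ)+(k:ℕ)) * mfun q with hvdef
  have hvq : ∀ q, v q = s * (-1:ℝ)^((q:ℕ)+(k:ℕ)) * mfun q := fun q => rfl
  have hv0 : ∀ q, v q ≠ 0 := by
    intro q
    rw [hvq]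
    exact mul_ne_zero (mul_ne_zero hs0 (pow_ne_zero _ (by norm_num))) (hmpos q).ne'
  have heven : (-1:ℝ)^((k:ℕ)+(k:ℕ)) = 1 := Even.neg_one_pow ⟨(k:ℕ), rfl⟩
  have hodd : (-1:ℝ)^((k:ℕ)+1+(k:ℕ)) = -1 := Odd.neg_one_pow ⟨(k:ℕ), by ring⟩
  have hvw : ∑ q, w q * v q = 0 := by
    rw [← Finset.add_sum_erase _ _ (Finset.mem_univ k.castSucc),
      ← Finset.add_sum_erase _ _
        (Finset.mem_erase.mpr ⟨hne_sc, Finset.mem_univ k.succ⟩)]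
    have hterm1 : w k.castSucc * v k.castSucc = a * P := by
      rw [hvq, hmc, hPdef]
      simp only [hcast, heven]
      ring
    have hterm2 : w k.succ * v k.succ = -(b * Q) := by
      rw [hvq, hms, hQdef]
      simp only [hsucc, hodd]
      ring
    have hrest : ∑ q ∈ (Finset.univ.erase k.castSucc).erase k.succ, w q * v q = E := by
      rw [hEdef]
      apply Finset.sum_congr rfl
      intro q hq
      have hq1 : q ≠ k.succ := (Finset.mem_erase.mp hq).1
      have hq2 : q ≠ k.castSucc := (Finset.mem_erase.mp (Finset.mem_erase.mp hq).2).1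
      rw [hvq, hmo q hq2 hq1]
      ring
    rw [hterm1, hterm2, hrest]
    linarith [habE]
  have hvalt : ∀ q : Fin (p+1), v q.castSucc * v q.succ < 0 := by
    intro q
    have e1 : ((q.castSucc : Fin (p+2)) : ℕ) = (q:ℕ) := rfl
    have e2 : ((q.succ : Fin (p+2)) : ℕ) = (q:ℕ) + 1 := rfl
    have hoq : (-1:ℝ)^((q:ℕ)+(k:ℕ)) * (-1:ℝ)^((q:ℕ)+1+(k:ℕ)) = -1 := by
      rw [← pow_add]
      exact Odd.neg_one_pow ⟨(q:ℕ)+(k:ℕ), by ring⟩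
    have hmm := mul_pos (hmpos q.castSucc) (hmpos q.succ)
    rw [hvq, hvq]
    simp only [e1, e2]
    have hkey : (s * (-1:ℝ)^((q:ℕ)+(k:ℕ)) * mfun q.castSucc) *
        (s * (-1:ℝ)^((q:ℕ)+1+(k:ℕ)) * mfun q.succ)
        = ((s*s) * ((-1:ℝ)^((q:ℕ)+(k:ℕ)) * (-1:ℝ)^((q:ℕ)+1+(k:ℕ)))) *
          (mfun q.castSucc * mfun q.succ) := by ring
    rw [hkey, hssq, hoq]
    nlinarith [hmm]
  set B : Matrix (Fin (p+2)) (Fin (p+1)) ℝ := A.submatrix δ β with hBdef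
  have horth : ∀ j : Fin (p+1), ∑ q, w q * B q j = 0 := by
    intro j
    have hcof := sum_cofactor_eq_zero (Matrix.of fun a b => A (δ b) (β a)) j
    have hdetq : ∀ q : Fin (p+2),
        (((Matrix.of fun a b => A (δ b) (β a)) :
          Matrix (Fin (p+1)) (Fin (p+2)) ℝ).submatrix id q.succAbove).det = M q := by
      intro q
      rw [← Matrix.det_transpose]
      have htr : (((Matrix.of fun a b => A (δ b) (β a)) :
          Matrix (Fin (p+1)) (Fin (p+2)) ℝ).submatrix id q.succAbove).transpose =
          A.submatrix (fun a => δ (q.succAbove a)) β := by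
        ext x y
        simp [Matrix.submatrix, Matrix.transpose]
      rw [htr]
    calc ∑ q, w q * B q j
        = ∑ q : Fin (p+2), (-1:ℝ)^(q:ℕ) * (Matrix.of fun a b => A (δ b) (β a)) j q *
            (((Matrix.of fun a b => A (δ b) (β a)) :
              Matrix (Fin (p+1)) (Fin (p+2)) ℝ).submatrix id q.succAbove).det := by
          apply Finset.sum_congr rfl
          intro q _
          rw [hdetq q, hwdef, hBdef]
          simp only [Matrix.of_apply, Matrix.submatrix_apply]
          ring
      _ = 0 := hcof
  set B₀ : Matrix (Fin (p+1)) (Fin (p+1)) ℝ :=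
    A.submatrix (fun a => δ a.castSucc) β with hB₀def
  have hB₀M : B₀.det = M (Fin.last (p+1)) := by
    rw [hB₀def, hMdef]
    congr 1
    ext a
    rw [Fin.succAbove_last]
  have hB₀ne : B₀.det ≠ 0 := by rw [hB₀M]; exact hM0 _
  set ξ : Fin (p+1) → ℝ := B₀⁻¹.mulVec (fun q' => v q'.castSucc) with hξdef
  have hBξ : B₀.mulVec ξ = fun q' => v q'.castSucc := by
    rw [hξdef, Matrix.mulVec_mulVec, Matrix.mul_nonsing_inv _ (isUnit_iff_ne_zero.mpr hB₀ne),
      Matrix.one_mulVec]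
  have hfullcast : ∀ q' : Fin (p+1), (B.mulVec ξ) q'.castSucc = v q'.castSucc := by
    intro q'
    have h1 : (B.mulVec ξ) q'.castSucc = (B₀.mulVec ξ) q' := rfl
    rw [h1, hBξ]
  have hsum1 : ∑ q, w q * (B.mulVec ξ) q = 0 := by
    have hswap : ∑ q, w q * (B.mulVec ξ) q = ∑ j, (∑ q, w q * B q j) * ξ j := by
      have h1 : ∀ q, w q * (B.mulVec ξ) q = ∑ j, w q * B q j * ξ j := by
        intro q
        show w q * (∑ j, B q j * ξ j) = _
        rw [Finset.mul_sum]
        apply Finset.sum_congr rfl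
        intro j _
        ring
      simp_rw [h1]
      rw [Finset.sum_comm]
      apply Finset.sum_congr rfl
      intro j _
      rw [Finset.sum_mul]
    rw [hswap]
    apply Finset.sum_eq_zero
    intro j _
    rw [horth j, zero_mul]
  have hfull : ∀ q, (B.mulVec ξ) q = v q := by
    have hlasteq : w (Fin.last (p+1)) * (B.mulVec ξ) (Fin.last (p+1)) =
        w (Fin.last (p+1)) * v (Fin.last (p+1)) := by
      have e1 := Fin.sum_univ_castSucc (f := fun q => w q * (B.mulVec ξ) q)
      have e2 := Fin.sum_univ_castSucc (f := fun q => w q * v q)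
      rw [hsum1] at e1
      rw [hvw] at e2
      have hcs : ∑ q' : Fin (p+1), w q'.castSucc * (B.mulVec ξ) q'.castSucc =
          ∑ q' : Fin (p+1), w q'.castSucc * v q'.castSucc := by
        apply Finset.sum_congr rfl
        intro q' _
        rw [hfullcast q']
      rw [hcs] at e1
      linarith
    intro q
    induction q using Fin.lastCases with
    | last => exact mul_left_cancel₀ (hw0 _) hlasteq
    | cast q' => exact hfullcast q'
  have hξne : ξ ≠ 0 := by
    intro h0
    apply hv0 ((0 : Fin (p+1)).castSucc)
    rw [← hfull]
    rw [h0, Matrix.mulVec_zero]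
    rfl
  set c := extVec β ξ with hcdef
  have hcβ : ∀ j, c (β j) = ξ j := extVec_apply β hβ.injective ξ
  have hcne : c ≠ 0 := by
    obtain ⟨j, hj⟩ := Function.ne_iff.mp hξne
    intro h0
    have := congrFun h0 (β j)
    rw [hcβ j] at this
    exact hj this
  have hsm : sMinus c ≤ p := sMinus_le_of_supp c (Finset.univ.image β)
    (by rw [Finset.card_image_of_injective _ hβ.injective, Finset.card_univ, Fintype.card_fin])
    (fun i h => extVec_supp β ξ i h)
  have hyv : ∀ q, (A.mulVec c) (δ q) = v q := by
    intro q
    rw [hcdef, mulVec_extVec]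
    have h2 : ∑ j, A (δ q) (β j) * ξ j = (B.mulVec ξ) q := rfl
    rw [h2, hfull]
  have hstrict := alt_sign v id hv0 hvalt
  have hple : p + 1 ≤ sPlus (A.mulVec c) := by
    apply sPlus_ge (A.mulVec c) (if 0 < v (id 0) then (1:ℝ) else -1)
      (by split_ifs <;> simp) δ hδ
    intro q
    rw [hyv q]
    exact (hstrict q).le
  have := hVDP c hcne hsm
  omega

/-- `A` is sign-regular of order `k` (`SR_k`): all `k×k` minors have the same
non-strict sign. -/
def SRof {n m : ℕ} (A : Matrix (Fin n) (Fin m) ℝ) (k : ℕ) : Prop :=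
  (∀ (α : Fin k → Fin n) (β : Fin k → Fin m), StrictMono α → StrictMono β →
      0 ≤ (A.submatrix α β).det) ∨
  (∀ (α : Fin k → Fin n) (β : Fin k → Fin m), StrictMono α → StrictMono β →
      (A.submatrix α β).det ≤ 0)

/-- A square matrix is Metzler if all its off-diagonal entries are nonnegative. -/
def IsMetzler {n : ℕ} (A : Matrix (Fin n) (Fin n) ℝ) : Prop :=
  ∀ i j : Fin n, i ≠ j → 0 ≤ A i j

/-- A square matrix is irreducible if the directed graph with an edge from `i`
to `j` whenever `i ≠ j` and `A i j ≠ 0` is strongly connected. -/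
def IsIrreducibleMatrix {n : ℕ} (A : Matrix (Fin n) (Fin n) ℝ) : Prop :=
  ∀ i j : Fin n, i ≠ j → Relation.TransGen (fun p q : Fin n => p ≠ q ∧ A p q ≠ 0) i j

/-- Membership in `Q`: Metzler, and the nonzero entries lie only on the main
diagonal, the super- and sub-diagonals, and the corner positions `(1,n)`, `(n,1)`
(in 0-indexed form: `(0, n-1)` and `(n-1, 0)`). -/
def memQ {n : ℕ} (A : Matrix (Fin n) (Fin n) ℝ) : Prop :=
  IsMetzler A ∧ ∀ i j : Fin n, A i j ≠ 0 →
    ((i : ℕ) = (j : ℕ) ∨ (j : ℕ) = (i : ℕ) + 1 ∨ (i : ℕ) = (j : ℕ) + 1 ∨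
      ((i : ℕ) = 0 ∧ (j : ℕ) = n - 1) ∨ ((i : ℕ) = n - 1 ∧ (j : ℕ) = 0))

/-- Membership in `Q⁺`: in `Q` and irreducible. -/
def memQplus {n : ℕ} (A : Matrix (Fin n) (Fin n) ℝ) : Prop :=
  memQ A ∧ IsIrreducibleMatrix A

/-- `P` is the permutation matrix of a cyclic shift `j ↦ j + k (mod n)`. -/
def IsCyclicPermMatrix {n : ℕ} (P : Matrix (Fin n) (Fin n) ℝ) : Prop :=
  ∃ k : ℕ, ∀ i j : Fin n, P i j = if (j : ℕ) % n = ((i : ℕ) + k) % n then 1 else 0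

/-- For a nonsingular `A ∈ ℝ^{n×n}` and `p ∈ {0,…,n-1}`:
(1) `s⁺(Ac) ≤ p` for every nonzero `c` with `s⁻(c) ≤ p`, iff
(2) `A` is `SSR_{p+1}`. -/
theorem nonstandard_VDP_iff_SSR (n : ℕ) (A : Matrix (Fin n) (Fin n) ℝ)
    (hA : A.det ≠ 0) (p : ℕ) (hp : p < n) :
    (∀ c : Fin n → ℝ, c ≠ 0 → sMinus c ≤ p → sPlus (A.mulVec c) ≤ p) ↔
      SSRof A (p + 1) := by
  constructor
  · intro hVDP
    rcases eq_or_lt_of_le (Nat.succ_le_of_lt hp) with heq | hlt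
    · -- n = p + 1 : the only minor is det A
      subst heq
      rcases lt_or_gt_of_ne hA with hneg | hpos
      · right
        intro α β hα hβ
        rw [fin_strictMono_id α hα, fin_strictMono_id β hβ, Matrix.submatrix_id_id]
        exact hneg
      · left
        intro α β hα hβ
        rw [fin_strictMono_id α hα, fin_strictMono_id β hβ, Matrix.submatrix_id_id]
        exact hpos
    · have hn : p + 2 ≤ n := hlt
      have hne := minors_ne_zero A hVDP hn
      have hle : p + 1 ≤ n := by omega
      set β₀ : Fin (p+1) → Fin n := Fin.castLE hle with hβ₀def
      have hβ₀SM : StrictMono β₀ := by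
        intro x y hxy
        rw [hβ₀def]
        rw [Fin.lt_def] at hxy ⊢
        simpa using hxy
      set R := (A.submatrix β₀ β₀).det with hRdef
      have claim : ∀ (α β : Fin (p+1) → Fin n), StrictMono α → StrictMono β →
          0 < (A.submatrix α β).det * R := by
        intro α β hα hβ
        have hcols := connect (fun β' => (A.submatrix α β').det)
          (fun β' hβ' => hne α β' hα hβ')
          (fun γ hγ k l => cols_adjacent A hVDP hn α hα γ hγ k l)
          β β₀ hβ hβ₀SM
        have hrows := connect (fun α' => (A.submatrix α' β₀).det)
          (fun α' hα' => hne α' β₀ hα' hβ₀SM)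
          (fun γ hγ k l => rows_adjacent A hVDP hn β₀ hβ₀SM γ hγ k l)
          α β₀ hα hβ₀SM
        exact sign_mul_trans hcols hrows
      rcases lt_trichotomy R 0 with hRneg | hR0 | hRpos
      · right
        intro α β hα hβ
        have h := claim α β hα hβ
        rcases mul_pos_iff.mp h with ⟨h1, h2⟩ | ⟨h1, h2⟩
        · linarith
        · exact h1
      · exact absurd hR0 (hne β₀ β₀ hβ₀SM hβ₀SM)
      · left
        intro α β hα hβ
        have h := claim α β hα hβ
        rcases mul_pos_iff.mp h with ⟨h1, h2⟩ | ⟨h1, h2⟩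
        · exact h1
        · linarith
  · intro hSSR c hc hsm
    exact VDP_of_SSR A hp hSSR c hc hsm
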